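/- arXiv:1905.07905 — 2 statements merged into one kernel-verified Lean document; each statement's English description precedes it below -/
import Mathlib

section
/- If u:Ω→ℝ is Lipschitz continuous with Lipschitz constant λ, then E_θ(u) ≤ λ^θ |Ω| ∫_{ℝⁿ} |z₁|^{θ₁}|z₂|^{θ₂}|z|^{−θ} ρ(z) dz < ∞. In particular E_θ(u) is finite, and E_p(u)=0 for every p<θ. -/
open MeasureTheory Filter Set
open scoped ENNReal Topology NNReal

noncomputable section

abbrev Euc (n : ℕ) : Type := EuclideanSpace ℝ (Fin n)

/-- Euclidean norm of a point of `ℝ^{n₁} × ℝ^{n₂}`. -/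
def prodNorm {n₁ n₂ : ℕ} (z : Euc n₁ × Euc n₂) : ℝ :=
  Real.sqrt (‖z.1‖ ^ 2 + ‖z.2‖ ^ 2)

/-- A radial nonnegative kernel of mass one supported in the unit ball. -/
structure IsKernel {n₁ n₂ : ℕ} (ρ : Euc n₁ × Euc n₂ → ℝ) : Prop where
  integrable : Integrable ρ volume
  nonneg : ∀ z, 0 ≤ ρ z
  total : (∫ z, ρ z) = 1
  radial : ∀ z w, prodNorm z = prodNorm w → ρ z = ρ w
  support : ∀ z, 1 ≤ prodNorm z → ρ z = 0

/-- A nonempty bounded open connected set. -/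
structure GoodDomain {m : ℕ} (Ω : Set (Euc m)) : Prop where
  nonempty : Ω.Nonempty
  isOpen : IsOpen Ω
  connected : IsConnected Ω
  bounded : Bornology.IsBounded Ω

/-- `Ω^ε := ⋂_{|z|<ε} (Ω - z)`. -/
def tube {m : ℕ} (Ω : Set (Euc m)) (ε : ℝ) : Set (Euc m) :=
  {x | ∀ z : Euc m, ‖z‖ < ε → x + z ∈ Ω}

/-- The localized energy `E_{ε,p}^{θ₁,θ₂}(u)`. -/
def Eeps {n₁ n₂ : ℕ} (ρ : Euc n₁ × Euc n₂ → ℝ) (Ω₁ : Set (Euc n₁)) (Ω₂ : Set (Euc n₂))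
    (θ₁ θ₂ p ε : ℝ) (u : Euc n₁ × Euc n₂ → ℝ) : ℝ≥0∞ :=
  ∫⁻ z : Euc n₁ × Euc n₂,
    ENNReal.ofReal ((ε ^ (n₁ + n₂))⁻¹ * ρ (ε⁻¹ • z)) *
      (∫⁻ x in (tube Ω₁ ε) ×ˢ (tube Ω₂ ε),
        ENNReal.ofReal
          (|u (x.1 + z.1, x.2) - u x| ^ θ₁ * |u (x.1, x.2 + z.2) - u x| ^ θ₂
            / prodNorm z ^ p))

/-- The energy `E_p^{θ₁,θ₂}(u) = liminf_{ε→0⁺} E_{ε,p}(u)`. -/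
def Energy {n₁ n₂ : ℕ} (ρ : Euc n₁ × Euc n₂ → ℝ) (Ω₁ : Set (Euc n₁)) (Ω₂ : Set (Euc n₂))
    (θ₁ θ₂ p : ℝ) (u : Euc n₁ × Euc n₂ → ℝ) : ℝ≥0∞ :=
  Filter.liminf (fun ε => Eeps ρ Ω₁ Ω₂ θ₁ θ₂ p ε u) (𝓝[>] (0 : ℝ))

/-- `u ∈ S(Ω)` : `u` depends a.e. only on `x₁` or only on `x₂`. -/
def memS {n₁ n₂ : ℕ} (Ω₁ : Set (Euc n₁)) (Ω₂ : Set (Euc n₂))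
    (u : Euc n₁ × Euc n₂ → ℝ) : Prop :=
  (∃ u₁ : Euc n₁ → ℝ, Measurable u₁ ∧
      ∀ᵐ x ∂(volume.restrict (Ω₁ ×ˢ Ω₂)), u x = u₁ x.1) ∨
  (∃ u₂ : Euc n₂ → ℝ, Measurable u₂ ∧
      ∀ᵐ x ∂(volume.restrict (Ω₁ ×ˢ Ω₂)), u x = u₂ x.2)

/-- The critical exponent `P(θ₁,θ₂)`. -/
def Pexp (θ₁ θ₂ : ℝ) : ℝ :=
  if θ₁ + θ₂ ≤ 1 then 2
  else if min θ₁ θ₂ ≤ 1 then 1 + (θ₁ + θ₂)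
  else min θ₁ θ₂ + (θ₁ + θ₂)

/-- The cross second derivative `∂_{x₁,i} ∂_{x₂,j} φ (x)`. -/
def crossD {n₁ n₂ : ℕ} (φ : Euc n₁ × Euc n₂ → ℝ) (i : Fin n₁) (j : Fin n₂)
    (x : Euc n₁ × Euc n₂) : ℝ :=
  fderiv ℝ (fun y => fderiv ℝ φ y ((0 : Euc n₁), EuclideanSpace.single j 1)) x
    (EuclideanSpace.single i 1, (0 : Euc n₂))

/-- The quantity `q(x,z)` from the paper. -/
def qfun {n₁ n₂ : ℕ} (θ₁ θ₂ : ℝ) (u : Euc n₁ × Euc n₂ → ℝ)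
    (z x : Euc n₁ × Euc n₂) : ℝ :=
  (|u (x.1 + z.1, x.2 + z.2) - u (x.1, x.2 + z.2)| ^ θ₁
      + |u (x.1 + z.1, x.2) - u x| ^ θ₁) *
  (|u (x.1 + z.1, x.2 + z.2) - u (x.1 + z.1, x.2)| ^ θ₂
      + |u (x.1, x.2 + z.2) - u x| ^ θ₂)


namespace Statement1Aux

variable {n₁ n₂ : ℕ}

lemma prodNorm_nonneg (z : Euc n₁ × Euc n₂) : 0 ≤ prodNorm z := Real.sqrt_nonneg _

lemma norm_fst_le_prodNorm (z : Euc n₁ × Euc n₂) : ‖z.1‖ ≤ prodNorm z := by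
  rw [prodNorm]
  calc ‖z.1‖ = Real.sqrt (‖z.1‖ ^ 2) := (Real.sqrt_sq (norm_nonneg _)).symm
    _ ≤ _ := Real.sqrt_le_sqrt (by nlinarith [sq_nonneg ‖z.2‖])

lemma norm_snd_le_prodNorm (z : Euc n₁ × Euc n₂) : ‖z.2‖ ≤ prodNorm z := by
  rw [prodNorm]
  calc ‖z.2‖ = Real.sqrt (‖z.2‖ ^ 2) := (Real.sqrt_sq (norm_nonneg _)).symm
    _ ≤ _ := Real.sqrt_le_sqrt (by nlinarith [sq_nonneg ‖z.1‖])

lemma prodNorm_smul {c : ℝ} (hc : 0 ≤ c) (z : Euc n₁ × Euc n₂) :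
    prodNorm (c • z) = c * prodNorm z := by
  have h1 : ‖(c • z).1‖ = c * ‖z.1‖ := by
    rw [Prod.smul_fst, norm_smul, Real.norm_eq_abs, abs_of_nonneg hc]
  have h2 : ‖(c • z).2‖ = c * ‖z.2‖ := by
    rw [Prod.smul_snd, norm_smul, Real.norm_eq_abs, abs_of_nonneg hc]
  rw [prodNorm, prodNorm, h1, h2, mul_pow, mul_pow, ← mul_add,
    Real.sqrt_mul (sq_nonneg c), Real.sqrt_sq hc]

/-- The homogeneous-degree-`θ₁+θ₂-p` weight. -/
def hfun (θ₁ θ₂ p : ℝ) (z : Euc n₁ × Euc n₂) : ℝ :=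
  ‖z.1‖ ^ θ₁ * ‖z.2‖ ^ θ₂ / prodNorm z ^ p

lemma hfun_nonneg (θ₁ θ₂ p : ℝ) (z : Euc n₁ × Euc n₂) : 0 ≤ hfun θ₁ θ₂ p z := by
  unfold hfun
  have := prodNorm_nonneg z
  positivity

lemma hfun_smul {θ₁ θ₂ p : ℝ} (hθ₁ : 0 < θ₁) (hθ₂ : 0 < θ₂) {ε : ℝ} (hε : 0 < ε)
    (w : Euc n₁ × Euc n₂) :
    hfun θ₁ θ₂ p (ε • w) = ε ^ (θ₁ + θ₂ - p) * hfun θ₁ θ₂ p w := by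
  have h1 : ‖(ε • w).1‖ = ε * ‖w.1‖ := by
    rw [Prod.smul_fst, norm_smul, Real.norm_eq_abs, abs_of_nonneg hε.le]
  have h2 : ‖(ε • w).2‖ = ε * ‖w.2‖ := by
    rw [Prod.smul_snd, norm_smul, Real.norm_eq_abs, abs_of_nonneg hε.le]
  rcases eq_or_lt_of_le (prodNorm_nonneg w) with h0 | h0
  · have hw1 : ‖w.1‖ = 0 := le_antisymm ((norm_fst_le_prodNorm w).trans h0.ge) (norm_nonneg _)
    unfold hfun
    rw [h1, hw1]
    simp [Real.zero_rpow hθ₁.ne']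
  · have hd : (0:ℝ) < prodNorm w ^ p := Real.rpow_pos_of_pos h0 p
    have he : (0:ℝ) < ε ^ p := Real.rpow_pos_of_pos hε p
    unfold hfun
    rw [h1, h2, prodNorm_smul hε.le,
      Real.mul_rpow hε.le (norm_nonneg _), Real.mul_rpow hε.le (norm_nonneg _),
      Real.mul_rpow hε.le (prodNorm_nonneg w),
      Real.rpow_sub hε, Real.rpow_add hε]
    field_simp

lemma tube_subset {m : ℕ} {Ω : Set (Euc m)} {ε : ℝ} (hε : 0 < ε) : tube Ω ε ⊆ Ω := by
  intro x hx
  have h := hx 0 (by simpa using hε)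
  simpa using h

lemma isClosed_tube {m : ℕ} (Ω : Set (Euc m)) (ε : ℝ) : IsClosed (tube Ω ε) := by
  refine isClosed_of_closure_subset ?_
  intro x hx z hz
  obtain ⟨y, hy, hxy⟩ := Metric.mem_closure_iff.1 hx (ε - ‖z‖) (by linarith)
  rw [dist_eq_norm] at hxy
  have hn : ‖x - y + z‖ < ε := lt_of_le_of_lt (norm_add_le _ _) (by linarith)
  have hmem := hy (x - y + z) hn
  have he : y + (x - y + z) = x + z := by abel
  rwa [he] at hmem

lemma lintegral_comp_smul {E : Type*} [NormedAddCommGroup E] [NormedSpace ℝ E]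
    [MeasurableSpace E] [BorelSpace E] [FiniteDimensional ℝ E]
    (μ : Measure E) [μ.IsAddHaarMeasure] (g : E → ℝ≥0∞) {R : ℝ} (hR : R ≠ 0) :
    ∫⁻ x, g (R • x) ∂μ =
      ENNReal.ofReal |(R ^ Module.finrank ℝ E)⁻¹| * ∫⁻ x, g x ∂μ := by
  calc ∫⁻ x, g (R • x) ∂μ
      = ∫⁻ x, g x ∂(Measure.map (R • ·) μ) :=
        (MeasureTheory.lintegral_map_equiv g
          ((Homeomorph.smulOfNeZero R hR).toMeasurableEquiv)).symm
    _ = _ := by rw [Measure.map_addHaar_smul μ hR, lintegral_smul_measure, smul_eq_mul]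

instance statement1_instHaar {n₁ n₂ : ℕ} :
    (volume : Measure (Euc n₁ × Euc n₂)).IsAddHaarMeasure := by
  rw [Measure.volume_eq_prod]
  exact Measure.prod.instIsAddHaarMeasure _ _

end Statement1Aux

open Statement1Aux in
lemma statement1_key {n₁ n₂ : ℕ} {Ω₁ : Set (Euc n₁)} {Ω₂ : Set (Euc n₂)}
    {ρ : Euc n₁ × Euc n₂ → ℝ} (hρ : IsKernel ρ)
    {θ₁ θ₂ : ℝ} (hθ₁ : 0 < θ₁) (hθ₂ : 0 < θ₂)
    {u : Euc n₁ × Euc n₂ → ℝ} {lam : ℝ} (hlam : 0 ≤ lam)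
    (hu : LipschitzOnWith (Real.toNNReal lam) u (Ω₁ ×ˢ Ω₂))
    (hV : volume (Ω₁ ×ˢ Ω₂) ≠ ⊤)
    {p : ℝ} (hp : 0 < p) {ε : ℝ} (hε : 0 < ε) :
    Eeps ρ Ω₁ Ω₂ θ₁ θ₂ p ε u ≤
      ENNReal.ofReal (ε ^ (θ₁ + θ₂ - p)) *
        (ENNReal.ofReal (lam ^ (θ₁ + θ₂)) * volume (Ω₁ ×ˢ Ω₂) *
          ∫⁻ z : Euc n₁ × Euc n₂, ENNReal.ofReal (hfun θ₁ θ₂ p z * ρ z)) := by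
  have hεn : (0:ℝ) < ε ^ (n₁ + n₂) := pow_pos hε _
  have step1 : ∀ z : Euc n₁ × Euc n₂,
      ENNReal.ofReal ((ε ^ (n₁ + n₂))⁻¹ * ρ (ε⁻¹ • z)) *
        (∫⁻ x in (tube Ω₁ ε) ×ˢ (tube Ω₂ ε),
          ENNReal.ofReal
            (|u (x.1 + z.1, x.2) - u x| ^ θ₁ * |u (x.1, x.2 + z.2) - u x| ^ θ₂
              / prodNorm z ^ p)) ≤
      ENNReal.ofReal ((ε ^ (n₁ + n₂))⁻¹ * ρ (ε⁻¹ • z)) *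
        (ENNReal.ofReal (lam ^ (θ₁ + θ₂) * hfun θ₁ θ₂ p z) * volume (Ω₁ ×ˢ Ω₂)) := by
    intro z
    by_cases hsupp : 1 ≤ prodNorm (ε⁻¹ • z)
    · simp [hρ.support _ hsupp]
    · push_neg at hsupp
      have hzε : prodNorm z < ε := by
        rw [prodNorm_smul (inv_nonneg.2 hε.le) z] at hsupp
        calc prodNorm z = ε * (ε⁻¹ * prodNorm z) := by field_simp
          _ < ε * 1 := mul_lt_mul_of_pos_left hsupp hε
          _ = ε := mul_one ε
      have hz1 : ‖z.1‖ < ε := lt_of_le_of_lt (norm_fst_le_prodNorm z) hzε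
      have hz2 : ‖z.2‖ < ε := lt_of_le_of_lt (norm_snd_le_prodNorm z) hzε
      refine mul_le_mul_right ?_ _
      calc (∫⁻ x in (tube Ω₁ ε) ×ˢ (tube Ω₂ ε),
              ENNReal.ofReal
                (|u (x.1 + z.1, x.2) - u x| ^ θ₁ * |u (x.1, x.2 + z.2) - u x| ^ θ₂
                  / prodNorm z ^ p))
          ≤ ∫⁻ _x in (tube Ω₁ ε) ×ˢ (tube Ω₂ ε),
              ENNReal.ofReal (lam ^ (θ₁ + θ₂) * hfun θ₁ θ₂ p z) := by
            refine setLIntegral_mono'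
              ((isClosed_tube Ω₁ ε).measurableSet.prod (isClosed_tube Ω₂ ε).measurableSet) ?_
            rintro x hx
            apply ENNReal.ofReal_le_ofReal
            have hxΩ : x ∈ Ω₁ ×ˢ Ω₂ := ⟨tube_subset hε hx.1, tube_subset hε hx.2⟩
            have hxz1 : ((x.1 + z.1, x.2) : Euc n₁ × Euc n₂) ∈ Ω₁ ×ˢ Ω₂ :=
              ⟨hx.1 z.1 hz1, tube_subset hε hx.2⟩
            have hxz2 : ((x.1, x.2 + z.2) : Euc n₁ × Euc n₂) ∈ Ω₁ ×ˢ Ω₂ :=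
              ⟨tube_subset hε hx.1, hx.2 z.2 hz2⟩
            have d1 : |u (x.1 + z.1, x.2) - u x| ≤ lam * ‖z.1‖ := by
              have h := hu.dist_le_mul _ hxz1 _ hxΩ
              rw [Real.dist_eq, Real.coe_toNNReal lam hlam] at h
              have hd : dist ((x.1 + z.1, x.2) : Euc n₁ × Euc n₂) x = ‖z.1‖ := by
                rw [Prod.dist_eq, dist_self, dist_eq_norm, add_sub_cancel_left,
                  max_eq_left (norm_nonneg _)]
              rwa [hd] at h
            have d2 : |u (x.1, x.2 + z.2) - u x| ≤ lam * ‖z.2‖ := by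
              have h := hu.dist_le_mul _ hxz2 _ hxΩ
              rw [Real.dist_eq, Real.coe_toNNReal lam hlam] at h
              have hd : dist ((x.1, x.2 + z.2) : Euc n₁ × Euc n₂) x = ‖z.2‖ := by
                rw [Prod.dist_eq, dist_self, dist_eq_norm, add_sub_cancel_left,
                  max_eq_right (norm_nonneg _)]
              rwa [hd] at h
            have e1 : |u (x.1 + z.1, x.2) - u x| ^ θ₁ ≤ (lam * ‖z.1‖) ^ θ₁ :=
              Real.rpow_le_rpow (abs_nonneg _) d1 hθ₁.le
            have e2 : |u (x.1, x.2 + z.2) - u x| ^ θ₂ ≤ (lam * ‖z.2‖) ^ θ₂ :=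
              Real.rpow_le_rpow (abs_nonneg _) d2 hθ₂.le
            have enum : |u (x.1 + z.1, x.2) - u x| ^ θ₁ * |u (x.1, x.2 + z.2) - u x| ^ θ₂
                ≤ lam ^ (θ₁ + θ₂) * (‖z.1‖ ^ θ₁ * ‖z.2‖ ^ θ₂) := by
              calc |u (x.1 + z.1, x.2) - u x| ^ θ₁ * |u (x.1, x.2 + z.2) - u x| ^ θ₂
                  ≤ (lam * ‖z.1‖) ^ θ₁ * (lam * ‖z.2‖) ^ θ₂ :=
                    mul_le_mul e1 e2 (Real.rpow_nonneg (abs_nonneg _) _)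
                      (Real.rpow_nonneg (by positivity) _)
                _ = lam ^ (θ₁ + θ₂) * (‖z.1‖ ^ θ₁ * ‖z.2‖ ^ θ₂) := by
                    rw [Real.mul_rpow hlam (norm_nonneg _), Real.mul_rpow hlam (norm_nonneg _),
                      Real.rpow_add_of_nonneg hlam hθ₁.le hθ₂.le]
                    ring
            unfold hfun
            rw [← mul_div_assoc]
            exact div_le_div_of_nonneg_right enum (Real.rpow_nonneg (prodNorm_nonneg z) p)
        _ = ENNReal.ofReal (lam ^ (θ₁ + θ₂) * hfun θ₁ θ₂ p z) *
              volume ((tube Ω₁ ε) ×ˢ (tube Ω₂ ε)) := setLIntegral_const _ _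
        _ ≤ _ := mul_le_mul_right
              (measure_mono (Set.prod_mono (tube_subset hε) (tube_subset hε))) _
  have hfr : Module.finrank ℝ (Euc n₁ × Euc n₂) = n₁ + n₂ := by
    simp [Module.finrank_prod, finrank_euclideanSpace_fin]
  have hconst :
      (ENNReal.ofReal ((ε ^ (n₁ + n₂))⁻¹) * ENNReal.ofReal (lam ^ (θ₁ + θ₂)) *
        ENNReal.ofReal (ε ^ (θ₁ + θ₂ - p)) * volume (Ω₁ ×ˢ Ω₂)) ≠ ⊤ :=
    ENNReal.mul_ne_top (ENNReal.mul_ne_top (ENNReal.mul_ne_top ENNReal.ofReal_ne_top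
      ENNReal.ofReal_ne_top) ENNReal.ofReal_ne_top) hV
  unfold Eeps
  refine le_trans (lintegral_mono step1) (le_of_eq ?_)
  have hpt : ∀ z : Euc n₁ × Euc n₂,
      ENNReal.ofReal ((ε ^ (n₁ + n₂))⁻¹ * ρ (ε⁻¹ • z)) *
        (ENNReal.ofReal (lam ^ (θ₁ + θ₂) * hfun θ₁ θ₂ p z) * volume (Ω₁ ×ˢ Ω₂)) =
      (ENNReal.ofReal ((ε ^ (n₁ + n₂))⁻¹) * ENNReal.ofReal (lam ^ (θ₁ + θ₂)) *
        ENNReal.ofReal (ε ^ (θ₁ + θ₂ - p)) * volume (Ω₁ ×ˢ Ω₂)) *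
        ENNReal.ofReal (hfun θ₁ θ₂ p (ε⁻¹ • z) * ρ (ε⁻¹ • z)) := by
    intro z
    have h1 : hfun θ₁ θ₂ p z = ε ^ (θ₁ + θ₂ - p) * hfun θ₁ θ₂ p (ε⁻¹ • z) := by
      conv_lhs => rw [← smul_inv_smul₀ hε.ne' z]
      exact hfun_smul hθ₁ hθ₂ hε _
    rw [ENNReal.ofReal_mul (inv_nonneg.2 hεn.le),
      ENNReal.ofReal_mul (Real.rpow_nonneg hlam _), h1,
      ENNReal.ofReal_mul (Real.rpow_nonneg hε.le _),
      ENNReal.ofReal_mul (hfun_nonneg θ₁ θ₂ p _)]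
    ring
  rw [lintegral_congr hpt, lintegral_const_mul' _ _ hconst]
  have hcv := lintegral_comp_smul (E := Euc n₁ × Euc n₂) volume
      (fun w => ENNReal.ofReal (hfun θ₁ θ₂ p w * ρ w)) (inv_ne_zero hε.ne')
  rw [hfr] at hcv
  have habs : |(ε⁻¹ ^ (n₁ + n₂))⁻¹| = ε ^ (n₁ + n₂) := by
    rw [inv_pow, inv_inv, abs_of_pos hεn]
  rw [habs] at hcv
  simp only [hcv]
  have hcancel : ENNReal.ofReal ((ε ^ (n₁ + n₂))⁻¹) * ENNReal.ofReal (ε ^ (n₁ + n₂)) = 1 := by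
    rw [← ENNReal.ofReal_mul (inv_nonneg.2 hεn.le), inv_mul_cancel₀ hεn.ne',
      ENNReal.ofReal_one]
  calc (ENNReal.ofReal ((ε ^ (n₁ + n₂))⁻¹) * ENNReal.ofReal (lam ^ (θ₁ + θ₂)) *
        ENNReal.ofReal (ε ^ (θ₁ + θ₂ - p)) * volume (Ω₁ ×ˢ Ω₂)) *
        (ENNReal.ofReal (ε ^ (n₁ + n₂)) *
          ∫⁻ z : Euc n₁ × Euc n₂, ENNReal.ofReal (hfun θ₁ θ₂ p z * ρ z))
      = (ENNReal.ofReal ((ε ^ (n₁ + n₂))⁻¹) * ENNReal.ofReal (ε ^ (n₁ + n₂))) *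
        (ENNReal.ofReal (ε ^ (θ₁ + θ₂ - p)) *
          (ENNReal.ofReal (lam ^ (θ₁ + θ₂)) * volume (Ω₁ ×ˢ Ω₂) *
            ∫⁻ z : Euc n₁ × Euc n₂, ENNReal.ofReal (hfun θ₁ θ₂ p z * ρ z))) := by ring
    _ = _ := by rw [hcancel, one_mul]


/-- for a Lipschitz function `u` with constant `λ`,
`E_θ(u) ≤ λ^θ |Ω| ∫ |z₁|^{θ₁}|z₂|^{θ₂}|z|^{-θ} ρ(z) dz < ∞`, and `E_p(u) = 0` for `p < θ`. -/
theorem statement1 {n₁ n₂ : ℕ} (hn₁ : 1 ≤ n₁) (hn₂ : 1 ≤ n₂)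
    (Ω₁ : Set (Euc n₁)) (Ω₂ : Set (Euc n₂)) (hΩ₁ : GoodDomain Ω₁) (hΩ₂ : GoodDomain Ω₂)
    (ρ : Euc n₁ × Euc n₂ → ℝ) (hρ : IsKernel ρ)
    (θ₁ θ₂ : ℝ) (hθ₁ : 0 < θ₁) (hθ₂ : 0 < θ₂)
    (u : Euc n₁ × Euc n₂ → ℝ) (lam : ℝ) (hlam : 0 ≤ lam)
    (hu : LipschitzOnWith (Real.toNNReal lam) u (Ω₁ ×ˢ Ω₂)) :
    Energy ρ Ω₁ Ω₂ θ₁ θ₂ (θ₁ + θ₂) u ≤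
      ENNReal.ofReal (lam ^ (θ₁ + θ₂)) * volume (Ω₁ ×ˢ Ω₂) *
        (∫⁻ z : Euc n₁ × Euc n₂,
          ENNReal.ofReal (‖z.1‖ ^ θ₁ * ‖z.2‖ ^ θ₂ / prodNorm z ^ (θ₁ + θ₂) * ρ z)) ∧
    (∫⁻ z : Euc n₁ × Euc n₂,
        ENNReal.ofReal (‖z.1‖ ^ θ₁ * ‖z.2‖ ^ θ₂ / prodNorm z ^ (θ₁ + θ₂) * ρ z)) < ⊤ ∧
    Energy ρ Ω₁ Ω₂ θ₁ θ₂ (θ₁ + θ₂) u < ⊤ ∧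
    (∀ p : ℝ, 0 < p → p < θ₁ + θ₂ → Energy ρ Ω₁ Ω₂ θ₁ θ₂ p u = 0) := by
  have hθ : (0:ℝ) < θ₁ + θ₂ := by linarith
  have hVfin : volume (Ω₁ ×ˢ Ω₂) ≠ ⊤ :=
    ((hΩ₁.bounded.prod hΩ₂.bounded).measure_lt_top).ne
  have hIle : ∀ p : ℝ, 0 < p → p ≤ θ₁ + θ₂ →
      (∫⁻ z : Euc n₁ × Euc n₂,
        ENNReal.ofReal (Statement1Aux.hfun θ₁ θ₂ p z * ρ z)) ≤ 1 := by
    intro p hp hpθ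
    have hpt : ∀ z : Euc n₁ × Euc n₂,
        ENNReal.ofReal (Statement1Aux.hfun θ₁ θ₂ p z * ρ z) ≤ ENNReal.ofReal (ρ z) := by
      intro z
      apply ENNReal.ofReal_le_ofReal
      by_cases hρz : ρ z = 0
      · simp [hρz]
      · have h1 : prodNorm z < 1 := by
          by_contra h
          exact hρz (hρ.support z (not_lt.1 h))
        rcases eq_or_lt_of_le (Statement1Aux.prodNorm_nonneg z) with h0 | h0
        · have hw1 : ‖z.1‖ = 0 :=
            le_antisymm ((Statement1Aux.norm_fst_le_prodNorm z).trans h0.ge) (norm_nonneg _)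
          simp [Statement1Aux.hfun, hw1, Real.zero_rpow hθ₁.ne', hρ.nonneg z]
        · have hle1 : Statement1Aux.hfun θ₁ θ₂ p z ≤ 1 := by
            unfold Statement1Aux.hfun
            rw [div_le_one (Real.rpow_pos_of_pos h0 p)]
            calc ‖z.1‖ ^ θ₁ * ‖z.2‖ ^ θ₂
                ≤ prodNorm z ^ θ₁ * prodNorm z ^ θ₂ :=
                  mul_le_mul
                    (Real.rpow_le_rpow (norm_nonneg _)
                      (Statement1Aux.norm_fst_le_prodNorm z) hθ₁.le)
                    (Real.rpow_le_rpow (norm_nonneg _)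
                      (Statement1Aux.norm_snd_le_prodNorm z) hθ₂.le)
                    (Real.rpow_nonneg (norm_nonneg _) _)
                    (Real.rpow_nonneg (Statement1Aux.prodNorm_nonneg z) _)
              _ = prodNorm z ^ (θ₁ + θ₂) := (Real.rpow_add h0 _ _).symm
              _ ≤ prodNorm z ^ p := Real.rpow_le_rpow_of_exponent_ge h0 h1.le hpθ
          calc Statement1Aux.hfun θ₁ θ₂ p z * ρ z ≤ 1 * ρ z :=
                mul_le_mul_of_nonneg_right hle1 (hρ.nonneg z)
            _ = ρ z := one_mul _
    calc (∫⁻ z : Euc n₁ × Euc n₂, ENNReal.ofReal (Statement1Aux.hfun θ₁ θ₂ p z * ρ z))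
        ≤ ∫⁻ z : Euc n₁ × Euc n₂, ENNReal.ofReal (ρ z) := lintegral_mono hpt
      _ = ENNReal.ofReal (∫ z : Euc n₁ × Euc n₂, ρ z) :=
          (ofReal_integral_eq_lintegral_ofReal hρ.integrable
            (Filter.Eventually.of_forall hρ.nonneg)).symm
      _ = 1 := by rw [hρ.total, ENNReal.ofReal_one]
  have hIeq : (∫⁻ z : Euc n₁ × Euc n₂,
      ENNReal.ofReal (‖z.1‖ ^ θ₁ * ‖z.2‖ ^ θ₂ / prodNorm z ^ (θ₁ + θ₂) * ρ z)) =
      ∫⁻ z : Euc n₁ × Euc n₂,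
        ENNReal.ofReal (Statement1Aux.hfun θ₁ θ₂ (θ₁ + θ₂) z * ρ z) := rfl
  have part1 : Energy ρ Ω₁ Ω₂ θ₁ θ₂ (θ₁ + θ₂) u ≤
      ENNReal.ofReal (lam ^ (θ₁ + θ₂)) * volume (Ω₁ ×ˢ Ω₂) *
        ∫⁻ z : Euc n₁ × Euc n₂,
          ENNReal.ofReal (Statement1Aux.hfun θ₁ θ₂ (θ₁ + θ₂) z * ρ z) := by
    have hev : ∀ᶠ ε in 𝓝[>] (0:ℝ), Eeps ρ Ω₁ Ω₂ θ₁ θ₂ (θ₁ + θ₂) ε u ≤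
        ENNReal.ofReal (lam ^ (θ₁ + θ₂)) * volume (Ω₁ ×ˢ Ω₂) *
          ∫⁻ z : Euc n₁ × Euc n₂,
            ENNReal.ofReal (Statement1Aux.hfun θ₁ θ₂ (θ₁ + θ₂) z * ρ z) := by
      filter_upwards [self_mem_nhdsWithin] with ε hε
      have h := statement1_key hρ hθ₁ hθ₂ hlam hu hVfin hθ (hε : (0:ℝ) < ε)
      rwa [sub_self, Real.rpow_zero, ENNReal.ofReal_one, one_mul] at h
    calc Energy ρ Ω₁ Ω₂ θ₁ θ₂ (θ₁ + θ₂) u ≤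
        Filter.liminf (fun _ : ℝ =>
          ENNReal.ofReal (lam ^ (θ₁ + θ₂)) * volume (Ω₁ ×ˢ Ω₂) *
            ∫⁻ z : Euc n₁ × Euc n₂,
              ENNReal.ofReal (Statement1Aux.hfun θ₁ θ₂ (θ₁ + θ₂) z * ρ z))
          (𝓝[>] (0:ℝ)) := Filter.liminf_le_liminf hev
      _ = _ := Filter.liminf_const _
  refine ⟨?_, ?_, ?_, ?_⟩
  · rw [hIeq]
    exact part1
  · rw [hIeq]
    exact lt_of_le_of_lt (hIle (θ₁ + θ₂) hθ le_rfl) ENNReal.one_lt_top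
  · refine lt_of_le_of_lt part1 ?_
    exact ENNReal.mul_lt_top (ENNReal.mul_ne_top ENNReal.ofReal_ne_top hVfin).lt_top
      (lt_of_le_of_lt (hIle (θ₁ + θ₂) hθ le_rfl) ENNReal.one_lt_top)
  · intro p hp hpθ
    set K := ENNReal.ofReal (lam ^ (θ₁ + θ₂)) * volume (Ω₁ ×ˢ Ω₂) *
        ∫⁻ z : Euc n₁ × Euc n₂, ENNReal.ofReal (Statement1Aux.hfun θ₁ θ₂ p z * ρ z) with hK
    have hKne : K ≠ ⊤ :=
      ENNReal.mul_ne_top (ENNReal.mul_ne_top ENNReal.ofReal_ne_top hVfin)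
        (lt_of_le_of_lt (hIle p hp hpθ.le) ENNReal.one_lt_top).ne
    have hev : ∀ᶠ ε in 𝓝[>] (0:ℝ), Eeps ρ Ω₁ Ω₂ θ₁ θ₂ p ε u ≤
        ENNReal.ofReal (ε ^ (θ₁ + θ₂ - p)) * K := by
      filter_upwards [self_mem_nhdsWithin] with ε hε
      exact statement1_key hρ hθ₁ hθ₂ hlam hu hVfin hp (hε : (0:ℝ) < ε)
    have h1 : Filter.Tendsto (fun ε : ℝ => ε ^ (θ₁ + θ₂ - p)) (𝓝[>] (0:ℝ)) (𝓝 0) := by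
      have h := (Real.continuousAt_rpow_const 0 (θ₁ + θ₂ - p)
        (Or.inr (by linarith))).tendsto
      rw [Real.zero_rpow (sub_ne_zero.2 (ne_of_gt hpθ))] at h
      exact h.mono_left nhdsWithin_le_nhds
    have h3 : Filter.Tendsto (fun ε : ℝ => ENNReal.ofReal (ε ^ (θ₁ + θ₂ - p)))
        (𝓝[>] (0:ℝ)) (𝓝 0) := by
      simpa [Function.comp_def] using (ENNReal.continuous_ofReal.tendsto 0).comp h1
    have h2 : Filter.Tendsto (fun ε : ℝ => ENNReal.ofReal (ε ^ (θ₁ + θ₂ - p)) * K)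
        (𝓝[>] (0:ℝ)) (𝓝 0) := by
      simpa using ENNReal.Tendsto.mul_const h3 (Or.inr hKne)
    have hle : Energy ρ Ω₁ Ω₂ θ₁ θ₂ p u ≤
        Filter.liminf (fun ε : ℝ => ENNReal.ofReal (ε ^ (θ₁ + θ₂ - p)) * K) (𝓝[>] (0:ℝ)) :=
      Filter.liminf_le_liminf hev
    rw [h2.liminf_eq] at hle
    exact le_antisymm hle (zero_le')
end
end

section
/- Let u:Ω→ℝ be continuously differentiable, with u and ∇u extending continuously to the closure of Ω. If E_θ(u)=0, then u∈S(Ω), i.e. u depends only on x₁ or only on x₂. -/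
open MeasureTheory Filter Set
open scoped ENNReal Topology NNReal

noncomputable section

namespace S2Aux

variable {n₁ n₂ : ℕ}

lemma prodNorm_nonneg (z : Euc n₁ × Euc n₂) : 0 ≤ prodNorm z := Real.sqrt_nonneg _

lemma prodNorm_sq (z : Euc n₁ × Euc n₂) : prodNorm z ^ 2 = ‖z.1‖ ^ 2 + ‖z.2‖ ^ 2 :=
  Real.sq_sqrt (by positivity)

lemma prodNorm_pos {z : Euc n₁ × Euc n₂} (hz : z ≠ 0) : 0 < prodNorm z := by
  rcases (prodNorm_nonneg z).lt_or_eq with h | h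
  · exact h
  · exfalso
    apply hz
    have h2 : ‖z.1‖ ^ 2 + ‖z.2‖ ^ 2 = 0 := by
      rw [← prodNorm_sq z, ← h]; ring
    have h3 : ‖z.1‖ = 0 ∧ ‖z.2‖ = 0 := by constructor <;> nlinarith [sq_nonneg ‖z.1‖, sq_nonneg ‖z.2‖, norm_nonneg z.1, norm_nonneg z.2]
    have : z.1 = 0 := norm_eq_zero.mp h3.1
    have : z.2 = 0 := norm_eq_zero.mp h3.2
    exact Prod.ext ‹z.1 = 0› ‹z.2 = 0›

lemma prodNorm_smul (c : ℝ) (z : Euc n₁ × Euc n₂) : prodNorm (c • z) = |c| * prodNorm z := by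
  have h : ‖(c • z).1‖ ^ 2 + ‖(c • z).2‖ ^ 2 = c ^ 2 * (‖z.1‖ ^ 2 + ‖z.2‖ ^ 2) := by
    have h1 : (c • z).1 = c • z.1 := rfl
    have h2 : (c • z).2 = c • z.2 := rfl
    rw [h1, h2, norm_smul, norm_smul, Real.norm_eq_abs, mul_pow, mul_pow, sq_abs]
    ring
  rw [prodNorm, h, Real.sqrt_mul (sq_nonneg c), Real.sqrt_sq_eq_abs, prodNorm]

lemma norm_fst_le (z : Euc n₁ × Euc n₂) : ‖z.1‖ ≤ prodNorm z := by
  rw [prodNorm]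
  calc ‖z.1‖ = Real.sqrt (‖z.1‖ ^ 2) := (Real.sqrt_sq (norm_nonneg _)).symm
  _ ≤ _ := Real.sqrt_le_sqrt (by nlinarith [sq_nonneg ‖z.2‖])

lemma norm_snd_le (z : Euc n₁ × Euc n₂) : ‖z.2‖ ≤ prodNorm z := by
  rw [prodNorm]
  calc ‖z.2‖ = Real.sqrt (‖z.2‖ ^ 2) := (Real.sqrt_sq (norm_nonneg _)).symm
  _ ≤ _ := Real.sqrt_le_sqrt (by nlinarith [sq_nonneg ‖z.1‖])

lemma continuous_prodNorm : Continuous fun z : Euc n₁ × Euc n₂ => prodNorm z :=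
  ((continuous_fst.norm.pow 2).add (continuous_snd.norm.pow 2)).sqrt

/-! ### fuse / split -/

def fuse (p : Euc n₁ × Euc n₂) : Euc (n₁ + n₂) :=
  WithLp.toLp 2 fun i => Fin.addCases (motive := fun _ => ℝ) (fun i₁ => p.1 i₁) (fun i₂ => p.2 i₂) i

def split (w : Euc (n₁ + n₂)) : Euc n₁ × Euc n₂ :=
  (WithLp.toLp 2 fun i => w (Fin.castAdd n₂ i), WithLp.toLp 2 fun j => w (Fin.natAdd n₁ j))

@[simp] lemma fuse_castAdd (p : Euc n₁ × Euc n₂) (i : Fin n₁) :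
    fuse p (Fin.castAdd n₂ i) = p.1 i := by simp [fuse]

@[simp] lemma fuse_natAdd (p : Euc n₁ × Euc n₂) (j : Fin n₂) :
    fuse p (Fin.natAdd n₁ j) = p.2 j := by simp [fuse]

lemma split_fuse (p : Euc n₁ × Euc n₂) : split (fuse p) = p := by
  refine Prod.ext ?_ ?_ <;> ext i <;> simp [split]

lemma fuse_split (w : Euc (n₁ + n₂)) : fuse (split w) = w := by
  ext i
  refine Fin.addCases (fun i₁ => ?_) (fun i₂ => ?_) i <;> simp [split]

lemma fuse_smul (c : ℝ) (p : Euc n₁ × Euc n₂) : fuse (c • p) = c • fuse p := by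
  ext i
  refine Fin.addCases (fun i₁ => ?_) (fun i₂ => ?_) i <;>
    simp [fuse, PiLp.smul_apply, smul_eq_mul]

lemma split_smul (c : ℝ) (w : Euc (n₁ + n₂)) : split (c • w) = c • split w := by
  refine Prod.ext ?_ ?_ <;> ext i <;> simp [split]

lemma split_add (a b : Euc (n₁ + n₂)) : split (a + b) = split a + split b := by
  refine Prod.ext ?_ ?_ <;> ext i <;> simp [split]

lemma fuse_zero : fuse (0 : Euc n₁ × Euc n₂) = 0 := by
  ext i
  refine Fin.addCases (fun i₁ => ?_) (fun i₂ => ?_) i <;> simp [fuse]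

lemma fuse_eq_zero {p : Euc n₁ × Euc n₂} (h : fuse p = 0) : p = 0 := by
  have h2 := congrArg split h
  rw [split_fuse] at h2
  rw [h2]
  refine Prod.ext ?_ ?_ <;> ext i <;> simp [split]

lemma norm_fuse (p : Euc n₁ × Euc n₂) : ‖fuse p‖ = prodNorm p := by
  rw [EuclideanSpace.norm_eq, prodNorm]
  congr 1
  rw [Fin.sum_univ_add (f := fun i => ‖fuse p i‖ ^ 2)]
  have e1 : ∀ i : Fin n₁, ‖fuse p (Fin.castAdd n₂ i)‖ ^ 2 = ‖p.1 i‖ ^ 2 := by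
    intro i; rw [fuse_castAdd]
  have e2 : ∀ j : Fin n₂, ‖fuse p (Fin.natAdd n₁ j)‖ ^ 2 = ‖p.2 j‖ ^ 2 := by
    intro j; rw [fuse_natAdd]
  rw [Finset.sum_congr rfl (fun i _ => e1 i), Finset.sum_congr rfl (fun j _ => e2 j),
    EuclideanSpace.norm_eq p.1, EuclideanSpace.norm_eq p.2,
    Real.sq_sqrt (by positivity), Real.sq_sqrt (by positivity)]

lemma measurable_split : Measurable (split (n₁ := n₁) (n₂ := n₂)) := by
  unfold split; fun_prop

lemma measurable_fuse : Measurable (fuse (n₁ := n₁) (n₂ := n₂)) := by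
  refine (PiLp.volume_preserving_toLp _).measurable.comp (measurable_pi_lambda _ fun i => ?_)
  refine Fin.addCases (fun i₁ => ?_) (fun i₂ => ?_) i
  · simpa using (by fun_prop : Continuous fun c : Euc n₁ × Euc n₂ => c.1 i₁).measurable
  · simpa using (by fun_prop : Continuous fun c : Euc n₁ × Euc n₂ => c.2 i₂).measurable

def fuseME : (Euc n₁ × Euc n₂) ≃ᵐ Euc (n₁ + n₂) where
  toFun := fuse
  invFun := split
  left_inv := split_fuse
  right_inv := fuse_split
  measurable_toFun := measurable_fuse
  measurable_invFun := measurable_split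

lemma measurePreserving_fuse :
    MeasurePreserving (fuse (n₁ := n₁) (n₂ := n₂)) volume volume := by
  have h1 : MeasurePreserving
      (Prod.map (⇑((MeasurableEquiv.toLp 2 (Fin n₁ → ℝ)).symm))
        (⇑((MeasurableEquiv.toLp 2 (Fin n₂ → ℝ)).symm)))
      (volume : Measure (Euc n₁ × Euc n₂))
      (volume : Measure ((Fin n₁ → ℝ) × (Fin n₂ → ℝ))) := by
    rw [Measure.volume_eq_prod, Measure.volume_eq_prod]
    exact (EuclideanSpace.volume_preserving_symm_measurableEquiv_toLp _).prod
      (EuclideanSpace.volume_preserving_symm_measurableEquiv_toLp _)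
  have h2 := MeasureTheory.volume_measurePreserving_sumPiEquivProdPi_symm
    (fun _ : Fin n₁ ⊕ Fin n₂ => ℝ)
  have h3 := MeasureTheory.volume_measurePreserving_piCongrLeft
    (fun _ : Fin (n₁ + n₂) => ℝ) finSumFinEquiv
  have h4 := (EuclideanSpace.volume_preserving_symm_measurableEquiv_toLp (Fin (n₁ + n₂))).symm
  have hcomp := ((h4.comp h3).comp h2).comp h1
  have hfun : (⇑((MeasurableEquiv.toLp 2 (Fin (n₁ + n₂) → ℝ)).symm).symm ∘
      ⇑(MeasurableEquiv.piCongrLeft (fun _ : Fin (n₁ + n₂) => ℝ) finSumFinEquiv) ∘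
      ⇑(MeasurableEquiv.sumPiEquivProdPi (fun _ : Fin n₁ ⊕ Fin n₂ => ℝ)).symm ∘
      Prod.map (⇑((MeasurableEquiv.toLp 2 (Fin n₁ → ℝ)).symm))
        (⇑((MeasurableEquiv.toLp 2 (Fin n₂ → ℝ)).symm))) = fuse (n₁ := n₁) (n₂ := n₂) := by
    funext p
    ext i
    obtain ⟨a, rfl⟩ := finSumFinEquiv.surjective i
    simp only [Function.comp_apply]
    have hpi : (⇑(MeasurableEquiv.piCongrLeft (fun _ : Fin (n₁ + n₂) => ℝ) finSumFinEquiv)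
        ((MeasurableEquiv.sumPiEquivProdPi (fun _ : Fin n₁ ⊕ Fin n₂ => ℝ)).symm
          (Prod.map (⇑((MeasurableEquiv.toLp 2 (Fin n₁ → ℝ)).symm))
            (⇑((MeasurableEquiv.toLp 2 (Fin n₂ → ℝ)).symm)) p))) (finSumFinEquiv a) =
        ((MeasurableEquiv.sumPiEquivProdPi (fun _ : Fin n₁ ⊕ Fin n₂ => ℝ)).symm
          (Prod.map (⇑((MeasurableEquiv.toLp 2 (Fin n₁ → ℝ)).symm))
            (⇑((MeasurableEquiv.toLp 2 (Fin n₂ → ℝ)).symm)) p)) a :=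
      MeasurableEquiv.piCongrLeft_apply_apply _ _ _
    have : (⇑((MeasurableEquiv.toLp 2 (Fin (n₁ + n₂) → ℝ)).symm).symm
          (⇑(MeasurableEquiv.piCongrLeft (fun _ : Fin (n₁ + n₂) => ℝ) finSumFinEquiv)
        ((MeasurableEquiv.sumPiEquivProdPi (fun _ : Fin n₁ ⊕ Fin n₂ => ℝ)).symm
          (Prod.map (⇑((MeasurableEquiv.toLp 2 (Fin n₁ → ℝ)).symm))
            (⇑((MeasurableEquiv.toLp 2 (Fin n₂ → ℝ)).symm)) p)))) (finSumFinEquiv a) =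
        (⇑(MeasurableEquiv.piCongrLeft (fun _ : Fin (n₁ + n₂) => ℝ) finSumFinEquiv)
        ((MeasurableEquiv.sumPiEquivProdPi (fun _ : Fin n₁ ⊕ Fin n₂ => ℝ)).symm
          (Prod.map (⇑((MeasurableEquiv.toLp 2 (Fin n₁ → ℝ)).symm))
            (⇑((MeasurableEquiv.toLp 2 (Fin n₂ → ℝ)).symm)) p))) (finSumFinEquiv a) := rfl
    rw [this, hpi]
    cases a with
    | inl i₁ =>
      rw [finSumFinEquiv_apply_left, fuse_castAdd]
      rfl
    | inr i₂ =>
      rw [finSumFinEquiv_apply_right, fuse_natAdd]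
      rfl
  rw [← hfun]
  exact hcomp


lemma lintegral_comp_smul_prod (f : Euc n₁ × Euc n₂ → ℝ≥0∞) {R : ℝ} (hR : 0 < R) :
    ∫⁻ z, f (R • z) = ENNReal.ofReal ((R ^ (n₁ + n₂))⁻¹) * ∫⁻ z, f z := by
  have hR0 : R ≠ 0 := ne_of_gt hR
  have hfr : Module.finrank ℝ (Euc n₁ × Euc n₂) = n₁ + n₂ := by
    simp [Module.finrank_prod, finrank_euclideanSpace_fin]
  haveI : (volume : Measure (Euc n₁ × Euc n₂)).IsAddHaarMeasure :=
    (Measure.volume_eq_prod (Euc n₁) (Euc n₂)) ▸ Measure.prod.instIsAddHaarMeasure volume volume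
  have hmap : Measure.map (R • ·) (volume : Measure (Euc n₁ × Euc n₂)) =
      ENNReal.ofReal (abs (R ^ Module.finrank ℝ (Euc n₁ × Euc n₂))⁻¹) • volume :=
    Measure.map_addHaar_smul _ hR0
  have heq : ∫⁻ z, f (R • z) ∂(volume : Measure (Euc n₁ × Euc n₂)) =
      ∫⁻ y, f y ∂(Measure.map (R • ·) (volume : Measure (Euc n₁ × Euc n₂))) :=
    (MeasureTheory.lintegral_map_equiv f
      (Homeomorph.smul (isUnit_iff_ne_zero.2 hR0).unit).toMeasurableEquiv).symm
  rw [heq, hmap, lintegral_smul_measure, hfr, abs_of_nonneg (by positivity), smul_eq_mul]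

lemma setLIntegral_cone_smul_invariant {ρ : Euc n₁ × Euc n₂ → ℝ}
    (hsupp : ∀ z, 0 ≤ ρ z) {C : Set (Euc n₁ × Euc n₂)} (hC : MeasurableSet C)
    (hcone : ∀ t : ℝ, 0 < t → ∀ z, z ∈ C ↔ t • z ∈ C) {ε : ℝ} (hε : 0 < ε) :
    ∫⁻ z in C, ENNReal.ofReal ((ε ^ (n₁ + n₂))⁻¹ * ρ (ε⁻¹ • z)) =
      ∫⁻ z in C, ENNReal.ofReal (ρ z) := by
  set N := n₁ + n₂
  have hεinv : 0 < ε⁻¹ := by positivity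
  set f : Euc n₁ × Euc n₂ → ℝ≥0∞ := C.indicator fun z => ENNReal.ofReal (ρ z) with hf
  have hcv : ∫⁻ z, f (ε⁻¹ • z) = ENNReal.ofReal ((ε⁻¹ ^ N)⁻¹) * ∫⁻ z, f z :=
    lintegral_comp_smul_prod f hεinv
  have hind : ∀ z, f (ε⁻¹ • z) = C.indicator (fun z => ENNReal.ofReal (ρ (ε⁻¹ • z))) z := by
    intro z
    by_cases hz : z ∈ C
    · rw [Set.indicator_of_mem hz, hf, Set.indicator_of_mem ((hcone ε⁻¹ hεinv z).mp hz)]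
    · rw [Set.indicator_of_notMem hz, hf,
        Set.indicator_of_notMem (fun hmem => hz ((hcone ε⁻¹ hεinv z).mpr hmem))]
  have h1 : ∫⁻ z in C, ENNReal.ofReal (ρ (ε⁻¹ • z)) =
      ENNReal.ofReal (ε ^ N) * ∫⁻ z in C, ENNReal.ofReal (ρ z) := by
    rw [← lintegral_indicator hC, ← lintegral_indicator hC, ← hf]
    rw [← lintegral_congr hind, hcv, inv_pow, inv_inv]
  calc ∫⁻ z in C, ENNReal.ofReal ((ε ^ N)⁻¹ * ρ (ε⁻¹ • z))
      = ∫⁻ z in C, ENNReal.ofReal ((ε ^ N)⁻¹) * ENNReal.ofReal (ρ (ε⁻¹ • z)) := by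
        apply lintegral_congr; intro z; rw [ENNReal.ofReal_mul (by positivity)]
    _ = ENNReal.ofReal ((ε ^ N)⁻¹) * ∫⁻ z in C, ENNReal.ofReal (ρ (ε⁻¹ • z)) :=
        lintegral_const_mul' _ _ ENNReal.ofReal_ne_top
    _ = (ENNReal.ofReal ((ε ^ N)⁻¹) * ENNReal.ofReal (ε ^ N)) *
          ∫⁻ z in C, ENNReal.ofReal (ρ z) := by rw [h1]; ring
    _ = ∫⁻ z in C, ENNReal.ofReal (ρ z) := by
        rw [← ENNReal.ofReal_mul (by positivity), inv_mul_cancel₀ (by positivity),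
          ENNReal.ofReal_one, one_mul]

lemma cone_lintegral_pos {N : ℕ} {f : Euc N → ℝ}
    (h_int : Integrable f volume) (h0 : ∀ z, 0 ≤ f z) (htot : ∫ z, f z = 1)
    (hrad : ∀ z w : Euc N, ‖z‖ = ‖w‖ → f z = f w)
    {V : Set (Euc N)} (hVo : IsOpen V)
    (hcone : ∀ t : ℝ, 0 < t → ∀ v ∈ V, t • v ∈ V)
    {v₀ : Euc N} (hv₀ : v₀ ∈ V) (hv₀0 : v₀ ≠ 0) :
    0 < ∫⁻ z in V, ENNReal.ofReal (f z) := by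
  haveI : Nontrivial (Euc N) := nontrivial_of_ne v₀ 0 hv₀0
  by_contra hcon
  push_neg at hcon
  have hm0 : ∫⁻ z in V, ENNReal.ofReal (f z) = 0 := le_antisymm (by simpa using hcon) zero_le
  -- normalized center
  have hv₀n : 0 < ‖v₀‖ := norm_pos_iff.mpr hv₀0
  set vb : Euc N := ‖v₀‖⁻¹ • v₀ with hvb
  have hvbV : vb ∈ V := hcone _ (by positivity) _ hv₀
  have hvbn : ‖vb‖ = 1 := by
    rw [hvb, norm_smul, norm_inv, norm_norm, inv_mul_cancel₀ (ne_of_gt hv₀n)]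
  -- reflections
  set R : Euc N → (Euc N ≃ₗᵢ[ℝ] Euc N) := fun w => Submodule.reflection (ℝ ∙ (vb - w))ᗮ with hR
  have hRmap : ∀ w : Euc N, ‖w‖ = 1 → R w vb = w := by
    intro w hw
    exact Submodule.reflection_sub (by rw [hvbn, hw])
  -- compact sphere, finite subcover
  have hcov : Metric.sphere (0 : Euc N) 1 ⊆ ⋃ w : Metric.sphere (0 : Euc N) 1,
      (R w) '' V := by
    intro w hw
    refine Set.mem_iUnion.2 ⟨⟨w, hw⟩, ⟨vb, hvbV, hRmap w (by simpa using hw)⟩⟩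
  obtain ⟨t, ht⟩ := (isCompact_sphere (0 : Euc N) 1).elim_finite_subcover
    (fun w : Metric.sphere (0 : Euc N) 1 => (R w) '' V)
    (fun w => ((R w).toHomeomorph.isOpen_image).2 hVo) hcov
  -- whole space minus 0 covered
  have hcov2 : ({0}ᶜ : Set (Euc N)) ⊆ ⋃ w ∈ t, (R w) '' V := by
    intro x hx
    have hx0 : x ≠ 0 := hx
    have hxn : 0 < ‖x‖ := norm_pos_iff.mpr hx0
    have hxs : ‖x‖⁻¹ • x ∈ Metric.sphere (0 : Euc N) 1 := by
      simp [norm_smul, inv_mul_cancel₀ (ne_of_gt hxn)]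
    obtain ⟨w, hwt, hmem⟩ := Set.mem_iUnion₂.1 (ht hxs)
    obtain ⟨v, hvV, hveq⟩ := hmem
    refine Set.mem_iUnion₂.2 ⟨w, hwt, ⟨‖x‖ • v, hcone _ hxn _ hvV, ?_⟩⟩
    rw [(R ↑w).map_smul, hveq, smul_smul, mul_inv_cancel₀ (ne_of_gt hxn), one_smul]
  -- each piece has zero integral
  have hpiece : ∀ w : Metric.sphere (0 : Euc N) 1,
      ∫⁻ z in (R w) '' V, ENNReal.ofReal (f z) = 0 := by
    intro w
    have hmp : MeasurePreserving (⇑(R w)) (volume : Measure (Euc N)) volume :=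
      (R w).measurePreserving
    have := hmp.setLIntegral_comp_emb
      ((R w).toHomeomorph.measurableEmbedding) (fun z => ENNReal.ofReal (f z)) V
    rw [← this]
    rw [← hm0]
    apply lintegral_congr
    intro z
    congr 1
    exact hrad _ _ ((R w).norm_map z)
  -- total integral is 1
  have hone : (1 : ℝ≥0∞) = ∫⁻ z, ENNReal.ofReal (f z) := by
    rw [← MeasureTheory.ofReal_integral_eq_lintegral_ofReal h_int
      (Filter.Eventually.of_forall h0), htot, ENNReal.ofReal_one]
  have hsplit : ∫⁻ z, ENNReal.ofReal (f z) =
      (∫⁻ z in ({0} : Set (Euc N)), ENNReal.ofReal (f z)) +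
      ∫⁻ z in ({0}ᶜ : Set (Euc N)), ENNReal.ofReal (f z) :=
    (lintegral_add_compl _ (measurableSet_singleton 0)).symm
  have hz : ∫⁻ z in ({0} : Set (Euc N)), ENNReal.ofReal (f z) = 0 :=
    setLIntegral_measure_zero _ _ (measure_singleton 0)
  have hle : ∫⁻ z in ({0}ᶜ : Set (Euc N)), ENNReal.ofReal (f z) ≤
      ∑' w : ↥t, ∫⁻ z in (R w) '' V, ENNReal.ofReal (f z) := by
    refine le_trans (lintegral_mono_set ?_) (lintegral_iUnion_le _ _)
    intro x hx
    obtain ⟨w, hwt, hmem⟩ := Set.mem_iUnion₂.1 (hcov2 hx)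
    exact Set.mem_iUnion.2 ⟨⟨w, hwt⟩, hmem⟩
  have hzero : ∑' w : ↥t, ∫⁻ z in (R ↑↑w) '' V, ENNReal.ofReal (f z) = 0 := by
    have h : ∀ w : ↥t, ∫⁻ z in (R ↑↑w) '' V, ENNReal.ofReal (f z) = 0 := fun w => hpiece ↑w
    rw [tsum_congr h]
    simp
  have hfinal : (1 : ℝ≥0∞) ≤ 0 := by
    calc (1 : ℝ≥0∞) = ∫⁻ z, ENNReal.ofReal (f z) := hone
    _ = (∫⁻ z in ({0} : Set (Euc N)), ENNReal.ofReal (f z)) +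
        ∫⁻ z in ({0}ᶜ : Set (Euc N)), ENNReal.ofReal (f z) := hsplit
    _ = ∫⁻ z in ({0}ᶜ : Set (Euc N)), ENNReal.ofReal (f z) := by rw [hz, zero_add]
    _ ≤ ∑' w : ↥t, ∫⁻ z in (R ↑↑w) '' V, ENNReal.ofReal (f z) := hle
    _ = 0 := hzero
  exact absurd hfinal (by simp)


lemma cone_lintegral_pos_prod {ρ : Euc n₁ × Euc n₂ → ℝ}
    (h_int : Integrable ρ volume) (h0 : ∀ z, 0 ≤ ρ z) (htot : ∫ z, ρ z = 1)
    (hrad : ∀ z w, prodNorm z = prodNorm w → ρ z = ρ w)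
    {C : Set (Euc n₁ × Euc n₂)} (hCo : IsOpen C)
    (hcone : ∀ t : ℝ, 0 < t → ∀ z ∈ C, t • z ∈ C)
    {z₀ : Euc n₁ × Euc n₂} (hz₀ : z₀ ∈ C) (hz₀0 : z₀ ≠ 0) :
    0 < ∫⁻ z in C, ENNReal.ofReal (ρ z) := by
  have hMPf : MeasurePreserving (fuse (n₁ := n₁) (n₂ := n₂)) volume volume :=
    measurePreserving_fuse
  have hemb : MeasurableEmbedding (fuse (n₁ := n₁) (n₂ := n₂)) :=
    (fuseME (n₁ := n₁) (n₂ := n₂)).measurableEmbedding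
  have htrans := hMPf.setLIntegral_comp_emb hemb (fun w => ENNReal.ofReal (ρ (split w))) C
  have hcongr : ∫⁻ z in C, ENNReal.ofReal (ρ (split (fuse z))) =
      ∫⁻ z in C, ENNReal.ofReal (ρ z) := by
    apply lintegral_congr; intro z; rw [split_fuse]
  rw [← hcongr, htrans]
  have hMPs : MeasurePreserving (split (n₁ := n₁) (n₂ := n₂)) volume volume :=
    MeasurePreserving.symm (fuseME (n₁ := n₁) (n₂ := n₂)) hMPf
  have hembs : MeasurableEmbedding (split (n₁ := n₁) (n₂ := n₂)) :=
    (fuseME (n₁ := n₁) (n₂ := n₂)).symm.measurableEmbedding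
  have himg : fuse '' C = split ⁻¹' C := by
    ext w
    constructor
    · rintro ⟨z, hz, rfl⟩; simpa [split_fuse] using hz
    · intro hw; exact ⟨split w, hw, fuse_split w⟩
  have hsplit_lin : IsLinearMap ℝ (split (n₁ := n₁) (n₂ := n₂)) :=
    ⟨split_add, split_smul⟩
  have hsplit_cont : Continuous (split (n₁ := n₁) (n₂ := n₂)) :=
    LinearMap.continuous_of_finiteDimensional hsplit_lin.mk'
  have hVo : IsOpen (fuse '' C) := himg ▸ hCo.preimage hsplit_cont
  refine cone_lintegral_pos (f := fun w => ρ (split w)) ?_ (fun z => h0 _) ?_ ?_ hVo ?_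
    (Set.mem_image_of_mem fuse hz₀) (fun h => hz₀0 (fuse_eq_zero h))
  · exact (hMPs.integrable_comp_emb hembs).mpr h_int
  · rw [hMPs.integral_comp hembs ρ]; exact htot
  · intro a b hab
    apply hrad
    calc prodNorm (split a) = ‖fuse (split a)‖ := (norm_fuse _).symm
    _ = ‖a‖ := by rw [fuse_split]
    _ = ‖b‖ := hab
    _ = ‖fuse (split b)‖ := by rw [fuse_split]
    _ = prodNorm (split b) := norm_fuse _
  · intro t ht w hw
    rw [himg] at hw ⊢
    have : split (t • w) = t • split w := split_smul t w
    rw [Set.mem_preimage, this]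
    exact hcone t ht _ hw

lemma eq_of_locallyConst {E' : Type*} [NormedAddCommGroup E'] {m : ℕ} {Ω : Set (Euc m)}
    (hΩo : IsOpen Ω) (hΩc : IsPreconnected Ω) {f : Euc m → E'}
    (hf : ContinuousOn f Ω)
    (hloc : ∀ y ∈ Ω, f y ≠ 0 → ∀ᶠ y' in 𝓝 y, f y' = f y)
    {y₀ : Euc m} (hy₀ : y₀ ∈ Ω) (hne : f y₀ ≠ 0) : ∀ y ∈ Ω, f y = f y₀ := by
  set A : Set (Euc m) := {y | ∀ᶠ y' in 𝓝 y, f y' = f y₀} with hA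
  set B : Set (Euc m) := Ω ∩ f ⁻¹' ({f y₀}ᶜ) with hB
  have hAo : IsOpen A := isOpen_setOf_eventually_nhds
  have hBo : IsOpen B := hf.isOpen_inter_preimage hΩo isOpen_compl_singleton
  have hcover : Ω ⊆ A ∪ B := by
    intro y hy
    by_cases hfy : f y = f y₀
    · left
      have : f y ≠ 0 := by rw [hfy]; exact hne
      filter_upwards [hloc y hy this] with q hq using hq.trans hfy
    · exact Or.inr ⟨hy, hfy⟩
  have hdisj : ¬ (Ω ∩ (A ∩ B)).Nonempty := by
    rintro ⟨p, _, hpA, hpB⟩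
    exact hpB.2 hpA.self_of_nhds
  intro y hy
  by_contra hfy
  have hAne : (Ω ∩ A).Nonempty := by
    refine ⟨y₀, hy₀, ?_⟩
    filter_upwards [hloc y₀ hy₀ hne] with q hq using hq
  have hBne : (Ω ∩ B).Nonempty := ⟨y, hy, hy, hfy⟩
  exact hdisj (hΩc A B hAo hBo hcover hAne hBne)

lemma const_of_fderiv_zero {m : ℕ} {Ω : Set (Euc m)} (hΩo : IsOpen Ω)
    (hΩc : IsPreconnected Ω) {v : Euc m → ℝ} {v' : Euc m → (Euc m →L[ℝ] ℝ)}
    (hv : ∀ y ∈ Ω, HasFDerivAt v (v' y) y) (hv' : ∀ y ∈ Ω, v' y = 0)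
    {y₀ : Euc m} (hy₀ : y₀ ∈ Ω) : ∀ y ∈ Ω, v y = v y₀ := by
  have hloc : ∀ y ∈ Ω, ∀ᶠ y' in 𝓝 y, v y' = v y := by
    intro y hy
    obtain ⟨s, hs, hball⟩ := Metric.isOpen_iff.1 hΩo y hy
    filter_upwards [Metric.ball_mem_nhds y hs] with y' hy'
    have hmvt := Convex.norm_image_sub_le_of_norm_hasFDerivWithin_le'
      (f := v) (f' := v') (φ := (0 : Euc m →L[ℝ] ℝ)) (C := 0)
      (fun ξ hξ => (hv ξ (hball hξ)).hasFDerivWithinAt)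
      (fun ξ hξ => by rw [hv' ξ (hball hξ), sub_zero, norm_zero])
      (convex_ball y s) (Metric.mem_ball_self hs) hy'
    simp only [ContinuousLinearMap.zero_apply, sub_zero, zero_mul,
      norm_le_zero_iff, sub_eq_zero] at hmvt
    exact hmvt
  have hvc : ContinuousOn v Ω := fun p hp => ((hv p hp).continuousAt).continuousWithinAt
  intro y hy
  by_contra hne
  have key := eq_of_locallyConst (f := fun p => v p - v y₀) hΩo hΩc
    (hvc.sub continuousOn_const)
    (fun p hp _ => by filter_upwards [hloc p hp] with q hq; rw [hq])
    hy (sub_ne_zero.2 hne)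
  have h0 := key y₀ hy₀
  simp only [sub_self] at h0
  exact hne (by linarith [sub_eq_zero.mp h0.symm])


set_option maxHeartbeats 2000000 in
lemma energy_ne_zero
    {Ω₁ : Set (Euc n₁)} {Ω₂ : Set (Euc n₂)} (hΩ₁o : IsOpen Ω₁) (hΩ₂o : IsOpen Ω₂)
    {ρ : Euc n₁ × Euc n₂ → ℝ} (hρ : IsKernel ρ)
    {θ₁ θ₂ : ℝ} (hθ₁ : 0 < θ₁) (hθ₂ : 0 < θ₂)
    {u : Euc n₁ × Euc n₂ → ℝ} {g : Euc n₁ × Euc n₂ → (Euc n₁ × Euc n₂ →L[ℝ] ℝ)}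
    (hg_cont : ContinuousOn g (closure (Ω₁ ×ˢ Ω₂)))
    (hderiv : ∀ x ∈ Ω₁ ×ˢ Ω₂, HasFDerivAt u (g x) x)
    {x0 : Euc n₁ × Euc n₂} (hx0 : x0 ∈ Ω₁ ×ˢ Ω₂)
    {v : Euc n₁} {w : Euc n₂} (hv : g x0 (v, 0) ≠ 0) (hw : g x0 (0, w) ≠ 0) :
    Energy ρ Ω₁ Ω₂ θ₁ θ₂ (θ₁ + θ₂) u ≠ 0 := by
  classical
  set L := g x0 with hL
  set α := |L (v, (0 : Euc n₂))| with hα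
  set β := |L ((0 : Euc n₁), w)| with hβ
  have hαpos : 0 < α := abs_pos.2 hv
  have hβpos : 0 < β := abs_pos.2 hw
  have hv0 : v ≠ 0 := by
    rintro rfl
    exact hv (map_zero (g x0))
  set zs : Euc n₁ × Euc n₂ := (v, w) with hzs
  have hzs0 : zs ≠ 0 := fun h => hv0 (congrArg Prod.fst h)
  set S := prodNorm zs with hSdef
  have hS : 0 < S := prodNorm_pos hzs0
  set c := min α β / (2 * S) with hc
  have hcpos : 0 < c := div_pos (lt_min hαpos hβpos) (by positivity)
  have hcS : c * S = min α β / 2 := by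
    rw [hc]; field_simp
  have hc1 : c * S < α := by
    rw [hcS]; have := min_le_left α β; linarith
  have hc2 : c * S < β := by
    rw [hcS]; have := min_le_right α β; linarith
  set C : Set (Euc n₁ × Euc n₂) :=
    {z | c * prodNorm z < |L (z.1, (0 : Euc n₂))| ∧
      c * prodNorm z < |L ((0 : Euc n₁), z.2)|} with hCdef
  have hCo : IsOpen C := by
    refine IsOpen.inter ?_ ?_
    · exact isOpen_lt (continuous_const.mul continuous_prodNorm)
        ((L.continuous.comp (continuous_fst.prodMk continuous_const)).abs)
    · exact isOpen_lt (continuous_const.mul continuous_prodNorm)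
        ((L.continuous.comp (continuous_const.prodMk continuous_snd)).abs)
  have hzsC : zs ∈ C := ⟨hc1, hc2⟩
  have haux : ∀ t : ℝ, 0 < t → ∀ z ∈ C, t • z ∈ C := by
    intro t ht z hz
    obtain ⟨ha, hb⟩ := hz
    have e1 : |L ((t • z : Euc n₁ × Euc n₂).1, (0 : Euc n₂))| = t * |L (z.1, (0 : Euc n₂))| := by
      have h : ((t • z : Euc n₁ × Euc n₂).1, (0 : Euc n₂)) = t • ((z.1 : Euc n₁), (0 : Euc n₂)) := by
        refine Prod.ext rfl ?_
        exact (smul_zero t).symm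
      rw [h, ContinuousLinearMap.map_smul, smul_eq_mul, abs_mul, abs_of_pos ht]
    have e2 : |L ((0 : Euc n₁), (t • z : Euc n₁ × Euc n₂).2)| = t * |L ((0 : Euc n₁), z.2)| := by
      have h : ((0 : Euc n₁), (t • z : Euc n₁ × Euc n₂).2) = t • ((0 : Euc n₁), (z.2 : Euc n₂)) := by
        refine Prod.ext ?_ rfl
        exact (smul_zero t).symm
      rw [h, ContinuousLinearMap.map_smul, smul_eq_mul, abs_mul, abs_of_pos ht]
    constructor
    · rw [prodNorm_smul, abs_of_pos ht, e1]
      calc c * (t * prodNorm z) = t * (c * prodNorm z) := by ring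
      _ < t * |L (z.1, (0 : Euc n₂))| := mul_lt_mul_of_pos_left ha ht
    · rw [prodNorm_smul, abs_of_pos ht, e2]
      calc c * (t * prodNorm z) = t * (c * prodNorm z) := by ring
      _ < t * |L ((0 : Euc n₁), z.2)| := mul_lt_mul_of_pos_left hb ht
  have hcone : ∀ t : ℝ, 0 < t → ∀ z, z ∈ C ↔ t • z ∈ C := by
    intro t ht z
    constructor
    · exact haux t ht z
    · intro h
      have := haux t⁻¹ (by positivity) _ h
      rwa [smul_smul, inv_mul_cancel₀ (ne_of_gt ht), one_smul] at this
  have h0C : (0 : Euc n₁ × Euc n₂) ∉ C := by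
    rintro ⟨ha, -⟩
    have hpn0 : prodNorm (0 : Euc n₁ × Euc n₂) = 0 := by simp [prodNorm]
    rw [hpn0, mul_zero] at ha
    have hz0 : L (((0 : Euc n₁ × Euc n₂)).1, (0 : Euc n₂)) = 0 := by
      have he : (((0 : Euc n₁ × Euc n₂)).1, (0 : Euc n₂)) = (0 : Euc n₁ × Euc n₂) := rfl
      rw [he, ContinuousLinearMap.map_zero]
    rw [hz0] at ha
    simp at ha
  -- geometry
  have hΩo : IsOpen (Ω₁ ×ˢ Ω₂) := hΩ₁o.prod hΩ₂o
  have hga : ContinuousAt g x0 :=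
    hg_cont.continuousAt (Filter.mem_of_superset (hΩo.mem_nhds hx0) subset_closure)
  obtain ⟨r₀, hr₀, hgr⟩ := Metric.continuousAt_iff.1 hga (c / 2) (by positivity)
  obtain ⟨r₁, hr₁, hball₁⟩ := Metric.isOpen_iff.1 hΩo x0 hx0
  set r := min r₀ r₁ with hrdef
  have hr : 0 < r := lt_min hr₀ hr₁
  have hball : Metric.ball x0 r ⊆ Ω₁ ×ˢ Ω₂ :=
    subset_trans (Metric.ball_subset_ball (min_le_right _ _)) hball₁
  have hgb : ∀ ξ ∈ Metric.ball x0 r, ‖g ξ - L‖ ≤ c / 2 := by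
    intro ξ hξ
    have h2 := hgr (show dist ξ x0 < r₀ from lt_of_lt_of_le hξ (min_le_left _ _))
    rw [dist_eq_norm] at h2
    exact h2.le
  have hMVT : ∀ x ∈ Metric.ball x0 r, ∀ y ∈ Metric.ball x0 r,
      ‖u y - u x - L (y - x)‖ ≤ c / 2 * ‖y - x‖ := by
    intro x hx y hy
    exact Convex.norm_image_sub_le_of_norm_hasFDerivWithin_le'
      (fun ξ hξ => (hderiv ξ (hball hξ)).hasFDerivWithinAt) hgb
      (convex_ball x0 r) hx hy
  -- the base set and constants
  set D : Set (Euc n₁ × Euc n₂) := Metric.ball x0.1 (r / 4) ×ˢ Metric.ball x0.2 (r / 4) with hD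
  have hDmeas : MeasurableSet D := (Metric.isOpen_ball.prod Metric.isOpen_ball).measurableSet
  set κ := (c / 2) ^ θ₁ * (c / 2) ^ θ₂ with hκ
  have hκpos : 0 < κ := by
    apply mul_pos <;> exact Real.rpow_pos_of_pos (by positivity) _
  set M := ENNReal.ofReal κ * volume D with hM
  have hDvol : volume D = volume (Metric.ball x0.1 (r / 4)) * volume (Metric.ball x0.2 (r / 4)) := by
    rw [hD, Measure.volume_eq_prod, Measure.prod_prod]
  have hMne : M ≠ 0 := by
    rw [hM]
    apply mul_ne_zero
    · simp only [ne_eq, ENNReal.ofReal_eq_zero, not_le]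
      exact hκpos
    · rw [hDvol]
      exact mul_ne_zero (ne_of_gt (Metric.measure_ball_pos volume _ (by positivity)))
        (ne_of_gt (Metric.measure_ball_pos volume _ (by positivity)))
  have hMtop : M ≠ ⊤ := by
    rw [hM]
    refine ENNReal.mul_ne_top ENNReal.ofReal_ne_top ?_
    rw [hDvol]
    exact ENNReal.mul_ne_top measure_ball_lt_top.ne measure_ball_lt_top.ne
  -- pointwise lower bound on the integrand
  have hpoint : ∀ ε : ℝ, 0 < ε → ε ≤ r / 4 → ∀ z ∈ C, prodNorm z < ε → ∀ x ∈ D,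
      κ ≤ |u (x.1 + z.1, x.2) - u x| ^ θ₁ * |u (x.1, x.2 + z.2) - u x| ^ θ₂
        / prodNorm z ^ (θ₁ + θ₂) := by
    intro ε hε hεr z hzC hzε x hx
    obtain ⟨hx1, hx2⟩ := hx
    have hz1 : ‖z.1‖ ≤ prodNorm z := norm_fst_le z
    have hz2 : ‖z.2‖ ≤ prodNorm z := norm_snd_le z
    have hzne : z ≠ 0 := fun h => h0C (h ▸ hzC)
    have hs : 0 < prodNorm z := prodNorm_pos hzne
    have hdx1 : dist x.1 x0.1 < r / 4 := Metric.mem_ball.mp hx1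
    have hdx2 : dist x.2 x0.2 < r / 4 := Metric.mem_ball.mp hx2
    have hxball : x ∈ Metric.ball x0 r := by
      rw [Metric.mem_ball, Prod.dist_eq]
      exact max_lt (by linarith) (by linarith)
    have hy1ball : ((x.1 + z.1, x.2) : Euc n₁ × Euc n₂) ∈ Metric.ball x0 r := by
      rw [Metric.mem_ball, Prod.dist_eq]
      refine max_lt ?_ (by simpa using by linarith : dist x.2 x0.2 < r)
      calc dist (x.1 + z.1) x0.1 ≤ dist (x.1 + z.1) x.1 + dist x.1 x0.1 := dist_triangle _ _ _
      _ = ‖z.1‖ + dist x.1 x0.1 := by rw [dist_eq_norm, add_sub_cancel_left]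
      _ < r := by have := lt_of_le_of_lt hz1 hzε; linarith
    have hy2ball : ((x.1, x.2 + z.2) : Euc n₁ × Euc n₂) ∈ Metric.ball x0 r := by
      rw [Metric.mem_ball, Prod.dist_eq]
      refine max_lt (by simpa using by linarith : dist x.1 x0.1 < r) ?_
      calc dist (x.2 + z.2) x0.2 ≤ dist (x.2 + z.2) x.2 + dist x.2 x0.2 := dist_triangle _ _ _
      _ = ‖z.2‖ + dist x.2 x0.2 := by rw [dist_eq_norm, add_sub_cancel_left]
      _ < r := by have := lt_of_le_of_lt hz2 hzε; linarith
    have hA : c / 2 * prodNorm z ≤ |u (x.1 + z.1, x.2) - u x| := by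
      have hsub : ((x.1 + z.1, x.2) : Euc n₁ × Euc n₂) - x = ((z.1 : Euc n₁), (0 : Euc n₂)) := by
        refine Prod.ext ?_ ?_
        · show x.1 + z.1 - x.1 = z.1
          exact add_sub_cancel_left x.1 z.1
        · show x.2 - x.2 = 0
          exact sub_self x.2
      have hnorm : ‖((z.1 : Euc n₁), (0 : Euc n₂))‖ = ‖z.1‖ := by
        rw [Prod.norm_def]
        simp [max_eq_left (norm_nonneg z.1)]
      have hmvt := hMVT x hxball _ hy1ball
      rw [hsub, hnorm, Real.norm_eq_abs] at hmvt
      have htri : |L ((z.1 : Euc n₁), (0 : Euc n₂))| - |u (x.1 + z.1, x.2) - u x| ≤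
          |u (x.1 + z.1, x.2) - u x - L ((z.1 : Euc n₁), (0 : Euc n₂))| := by
        calc |L ((z.1 : Euc n₁), (0 : Euc n₂))| - |u (x.1 + z.1, x.2) - u x|
            ≤ |L ((z.1 : Euc n₁), (0 : Euc n₂)) - (u (x.1 + z.1, x.2) - u x)| :=
          abs_sub_abs_le_abs_sub _ _
        _ = |u (x.1 + z.1, x.2) - u x - L ((z.1 : Euc n₁), (0 : Euc n₂))| := abs_sub_comm _ _
      have hCz := hzC.1
      have hmul : c / 2 * ‖z.1‖ ≤ c / 2 * prodNorm z :=
        mul_le_mul_of_nonneg_left hz1 (by positivity)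
      linarith
    have hB : c / 2 * prodNorm z ≤ |u (x.1, x.2 + z.2) - u x| := by
      have hsub : ((x.1, x.2 + z.2) : Euc n₁ × Euc n₂) - x = ((0 : Euc n₁), (z.2 : Euc n₂)) := by
        refine Prod.ext ?_ ?_
        · show x.1 - x.1 = 0
          exact sub_self x.1
        · show x.2 + z.2 - x.2 = z.2
          exact add_sub_cancel_left x.2 z.2
      have hnorm : ‖((0 : Euc n₁), (z.2 : Euc n₂))‖ = ‖z.2‖ := by
        rw [Prod.norm_def]
        simp [max_eq_right (norm_nonneg z.2)]
      have hmvt := hMVT x hxball _ hy2ball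
      rw [hsub, hnorm, Real.norm_eq_abs] at hmvt
      have htri : |L ((0 : Euc n₁), (z.2 : Euc n₂))| - |u (x.1, x.2 + z.2) - u x| ≤
          |u (x.1, x.2 + z.2) - u x - L ((0 : Euc n₁), (z.2 : Euc n₂))| := by
        calc |L ((0 : Euc n₁), (z.2 : Euc n₂))| - |u (x.1, x.2 + z.2) - u x|
            ≤ |L ((0 : Euc n₁), (z.2 : Euc n₂)) - (u (x.1, x.2 + z.2) - u x)| :=
          abs_sub_abs_le_abs_sub _ _
        _ = |u (x.1, x.2 + z.2) - u x - L ((0 : Euc n₁), (z.2 : Euc n₂))| := abs_sub_comm _ _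
      have hCz := hzC.2
      have hmul : c / 2 * ‖z.2‖ ≤ c / 2 * prodNorm z :=
        mul_le_mul_of_nonneg_left hz2 (by positivity)
      linarith
    rw [le_div_iff₀ (Real.rpow_pos_of_pos hs _)]
    have e1 : (c / 2 * prodNorm z) ^ θ₁ ≤ |u (x.1 + z.1, x.2) - u x| ^ θ₁ :=
      Real.rpow_le_rpow (by positivity) hA hθ₁.le
    have e2 : (c / 2 * prodNorm z) ^ θ₂ ≤ |u (x.1, x.2 + z.2) - u x| ^ θ₂ :=
      Real.rpow_le_rpow (by positivity) hB hθ₂.le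
    calc κ * prodNorm z ^ (θ₁ + θ₂)
        = (c / 2 * prodNorm z) ^ θ₁ * (c / 2 * prodNorm z) ^ θ₂ := by
          rw [Real.mul_rpow (by positivity) hs.le, Real.mul_rpow (by positivity) hs.le,
            Real.rpow_add hs, hκ]
          ring
    _ ≤ |u (x.1 + z.1, x.2) - u x| ^ θ₁ * |u (x.1, x.2 + z.2) - u x| ^ θ₂ :=
      mul_le_mul e1 e2 (by positivity) (by positivity)
  -- D sits inside the tubes
  have hDtube : ∀ ε : ℝ, 0 < ε → ε ≤ r / 4 → D ⊆ (tube Ω₁ ε) ×ˢ (tube Ω₂ ε) := by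
    intro ε hε hεr x hx
    obtain ⟨hx1, hx2⟩ := hx
    have hdx1 : dist x.1 x0.1 < r / 4 := Metric.mem_ball.mp hx1
    have hdx2 : dist x.2 x0.2 < r / 4 := Metric.mem_ball.mp hx2
    constructor
    · intro ζ hζ
      have hmem : ((x.1 + ζ, x.2) : Euc n₁ × Euc n₂) ∈ Ω₁ ×ˢ Ω₂ := by
        apply hball
        rw [Metric.mem_ball, Prod.dist_eq]
        refine max_lt ?_ (by linarith)
        calc dist (x.1 + ζ) x0.1 ≤ dist (x.1 + ζ) x.1 + dist x.1 x0.1 := dist_triangle _ _ _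
        _ = ‖ζ‖ + dist x.1 x0.1 := by rw [dist_eq_norm, add_sub_cancel_left]
        _ < r := by linarith
      exact hmem.1
    · intro ζ hζ
      have hmem : ((x.1, x.2 + ζ) : Euc n₁ × Euc n₂) ∈ Ω₁ ×ˢ Ω₂ := by
        apply hball
        rw [Metric.mem_ball, Prod.dist_eq]
        refine max_lt (by linarith) ?_
        calc dist (x.2 + ζ) x0.2 ≤ dist (x.2 + ζ) x.2 + dist x.2 x0.2 := dist_triangle _ _ _
        _ = ‖ζ‖ + dist x.2 x0.2 := by rw [dist_eq_norm, add_sub_cancel_left]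
        _ < r := by linarith
      exact hmem.2
  -- the main estimate, for all small ε
  have hmain : ∀ ε : ℝ, 0 < ε → ε ≤ r / 4 →
      (∫⁻ z in C, ENNReal.ofReal (ρ z)) * M ≤ Eeps ρ Ω₁ Ω₂ θ₁ θ₂ (θ₁ + θ₂) ε u := by
    intro ε hε hεr
    have hstep1 : ∀ z : Euc n₁ × Euc n₂,
        C.indicator (fun z => ENNReal.ofReal ((ε ^ (n₁ + n₂))⁻¹ * ρ (ε⁻¹ • z)) * M) z ≤
        ENNReal.ofReal ((ε ^ (n₁ + n₂))⁻¹ * ρ (ε⁻¹ • z)) *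
          (∫⁻ x in (tube Ω₁ ε) ×ˢ (tube Ω₂ ε),
            ENNReal.ofReal
              (|u (x.1 + z.1, x.2) - u x| ^ θ₁ * |u (x.1, x.2 + z.2) - u x| ^ θ₂
                / prodNorm z ^ (θ₁ + θ₂))) := by
      intro z
      by_cases hzC : z ∈ C
      swap
      · rw [Set.indicator_of_notMem hzC]
        exact zero_le
      rw [Set.indicator_of_mem hzC]
      by_cases hzε : prodNorm z < ε
      · apply mul_le_mul_right
        calc M = ∫⁻ _ in D, ENNReal.ofReal κ := by rw [setLIntegral_const, hM]
        _ ≤ ∫⁻ x in D, ENNReal.ofReal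
              (|u (x.1 + z.1, x.2) - u x| ^ θ₁ * |u (x.1, x.2 + z.2) - u x| ^ θ₂
                / prodNorm z ^ (θ₁ + θ₂)) := by
            apply lintegral_mono_ae
            refine ae_restrict_of_forall_mem hDmeas (fun x hx => ?_)
            exact ENNReal.ofReal_le_ofReal (hpoint ε hε hεr z hzC hzε x hx)
        _ ≤ _ := lintegral_mono_set (hDtube ε hε hεr)
      · have hρ0 : ρ (ε⁻¹ • z) = 0 := by
          apply hρ.support
          rw [prodNorm_smul, abs_of_pos (by positivity : (0:ℝ) < ε⁻¹)]
          calc (1:ℝ) = ε⁻¹ * ε := (inv_mul_cancel₀ (ne_of_gt hε)).symm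
          _ ≤ ε⁻¹ * prodNorm z :=
            mul_le_mul_of_nonneg_left (not_lt.mp hzε) (by positivity)
        rw [hρ0, mul_zero, ENNReal.ofReal_zero, zero_mul, zero_mul]
    calc (∫⁻ z in C, ENNReal.ofReal (ρ z)) * M
        = (∫⁻ z in C, ENNReal.ofReal ((ε ^ (n₁ + n₂))⁻¹ * ρ (ε⁻¹ • z))) * M := by
          rw [setLIntegral_cone_smul_invariant hρ.nonneg hCo.measurableSet hcone hε]
    _ = ∫⁻ z in C, ENNReal.ofReal ((ε ^ (n₁ + n₂))⁻¹ * ρ (ε⁻¹ • z)) * M :=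
          (lintegral_mul_const' M _ hMtop).symm
    _ = ∫⁻ z, C.indicator (fun z => ENNReal.ofReal ((ε ^ (n₁ + n₂))⁻¹ * ρ (ε⁻¹ • z)) * M) z :=
          (lintegral_indicator hCo.measurableSet _).symm
    _ ≤ Eeps ρ Ω₁ Ω₂ θ₁ θ₂ (θ₁ + θ₂) ε u := by
          unfold Eeps
          exact lintegral_mono hstep1
  have hpos : 0 < ∫⁻ z in C, ENNReal.ofReal (ρ z) :=
    cone_lintegral_pos_prod hρ.integrable hρ.nonneg hρ.total hρ.radial hCo haux hzsC hzs0
  intro hE0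
  have hlim : (∫⁻ z in C, ENNReal.ofReal (ρ z)) * M ≤ Energy ρ Ω₁ Ω₂ θ₁ θ₂ (θ₁ + θ₂) u := by
    refine Filter.le_liminf_of_le (by isBoundedDefault) ?_
    filter_upwards [Ioc_mem_nhdsGT (by positivity : (0:ℝ) < r / 4)] with ε hε
    exact hmain ε hε.1 hε.2
  rw [hE0] at hlim
  have hne : (∫⁻ z in C, ENNReal.ofReal (ρ z)) * M ≠ 0 := mul_ne_zero (ne_of_gt hpos) hMne
  exact hne (le_antisymm hlim zero_le)


lemma slice1 {Ω₁ : Set (Euc n₁)} {Ω₂ : Set (Euc n₂)}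
    (hΩ₁o : IsOpen Ω₁) (hΩ₂o : IsOpen Ω₂) (hΩ₂c : IsPreconnected Ω₂)
    {u : Euc n₁ × Euc n₂ → ℝ} {g : Euc n₁ × Euc n₂ → (Euc n₁ × Euc n₂ →L[ℝ] ℝ)}
    (hg_cont : ContinuousOn g (closure (Ω₁ ×ˢ Ω₂)))
    (hderiv : ∀ x ∈ Ω₁ ×ˢ Ω₂, HasFDerivAt u (g x) x)
    (hkey : ∀ p ∈ Ω₁ ×ˢ Ω₂, (∀ v : Euc n₁, g p (v, 0) = 0) ∨ (∀ w : Euc n₂, g p (0, w) = 0))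
    {x₁ : Euc n₁} (hx₁ : x₁ ∈ Ω₁) {y₀ : Euc n₂} (hy₀ : y₀ ∈ Ω₂)
    {v : Euc n₁} (hv : g (x₁, y₀) (v, 0) ≠ 0) :
    ∀ y ∈ Ω₂, ∃ v' : Euc n₁, g (x₁, y) (v', 0) ≠ 0 := by
  set J₁ := ContinuousLinearMap.inl ℝ (Euc n₁) (Euc n₂) with hJ₁
  set J₂ := ContinuousLinearMap.inr ℝ (Euc n₁) (Euc n₂) with hJ₂
  set f : Euc n₂ → (Euc n₁ →L[ℝ] ℝ) := fun y => (g (x₁, y)).comp J₁ with hf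
  have hιcont : Continuous (fun y : Euc n₂ => ((x₁, y) : Euc n₁ × Euc n₂)) :=
    continuous_const.prodMk continuous_id
  have hmaps : ∀ y ∈ Ω₂, ((x₁, y) : Euc n₁ × Euc n₂) ∈ closure (Ω₁ ×ˢ Ω₂) := fun y hy =>
    subset_closure (Set.mk_mem_prod hx₁ hy)
  have hgy : ContinuousOn (fun y => g (x₁, y)) Ω₂ :=
    hg_cont.comp hιcont.continuousOn hmaps
  have hcomp_lin : IsLinearMap ℝ (fun T : (Euc n₁ × Euc n₂) →L[ℝ] ℝ => T.comp J₁) :=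
    ⟨fun a b => by ext x; simp, fun cc a => by ext x; simp⟩
  have hcomp_cont : Continuous (fun T : (Euc n₁ × Euc n₂) →L[ℝ] ℝ => T.comp J₁) :=
    LinearMap.continuous_of_finiteDimensional hcomp_lin.mk'
  have hfc : ContinuousOn f Ω₂ := hcomp_cont.comp_continuousOn hgy
  have hloc : ∀ y ∈ Ω₂, f y ≠ 0 → ∀ᶠ y' in 𝓝 y, f y' = f y := by
    intro y hy hfy
    have hGcont : ContinuousOn (fun p => (g p).comp J₁) (Ω₁ ×ˢ Ω₂) :=
      hcomp_cont.comp_continuousOn (hg_cont.mono subset_closure)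
    have hOopen : IsOpen ((Ω₁ ×ˢ Ω₂) ∩ (fun p => (g p).comp J₁) ⁻¹' ({0}ᶜ)) :=
      hGcont.isOpen_inter_preimage (hΩ₁o.prod hΩ₂o) isOpen_compl_singleton
    have hyO : ((x₁, y) : Euc n₁ × Euc n₂) ∈
        (Ω₁ ×ˢ Ω₂) ∩ (fun p => (g p).comp J₁) ⁻¹' ({0}ᶜ) := ⟨⟨hx₁, hy⟩, hfy⟩
    obtain ⟨s, hs, hballO⟩ := Metric.isOpen_iff.1 hOopen _ hyO
    have hA2 : ∀ p ∈ Metric.ball ((x₁, y) : Euc n₁ × Euc n₂) s, ∀ w' : Euc n₂,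
        g p (0, w') = 0 := by
      intro p hp w'
      obtain ⟨hpΩ, hpne⟩ := hballO hp
      rcases hkey p hpΩ with h1 | h2
      · exact absurd (by ext v''; simpa [hJ₁] using h1 v'' : (g p).comp J₁ = 0) hpne
      · exact h2 w'
    have hballsub : ∀ q₁ ∈ Metric.ball x₁ s, ∀ q₂' ∈ Metric.ball y s,
        ((q₁, q₂') : Euc n₁ × Euc n₂) ∈ Metric.ball ((x₁, y) : Euc n₁ × Euc n₂) s := by
      intro q₁ hq₁ q₂' hq₂'
      rw [Metric.mem_ball, Prod.dist_eq]
      exact max_lt (Metric.mem_ball.mp hq₁) (Metric.mem_ball.mp hq₂')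
    have hconst2 : ∀ q₁ ∈ Metric.ball x₁ s, ∀ q₂ ∈ Metric.ball y s,
        u (q₁, q₂) = u (q₁, y) := by
      intro q₁ hq₁ q₂ hq₂
      have hmvt := Convex.norm_image_sub_le_of_norm_hasFDerivWithin_le'
        (f := fun q₂' => u (q₁, q₂')) (f' := fun q₂' => (g (q₁, q₂')).comp J₂)
        (φ := 0) (C := 0)
        (fun ξ hξ => by
          have hp : ((q₁, ξ) : Euc n₁ × Euc n₂) ∈ Ω₁ ×ˢ Ω₂ :=
            (hballO (hballsub q₁ hq₁ ξ hξ)).1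
          exact ((hderiv _ hp).comp ξ (hasFDerivAt_prodMk_right q₁ ξ)).hasFDerivWithinAt)
        (fun ξ hξ => by
          have h0 : (g (q₁, ξ)).comp J₂ = 0 := by
            ext w''; simpa [hJ₂] using hA2 _ (hballsub q₁ hq₁ ξ hξ) w''
          show ‖(g (q₁, ξ)).comp J₂ - 0‖ ≤ 0
          rw [h0, sub_zero, norm_zero])
        (convex_ball y s) (Metric.mem_ball_self hs) hq₂
      simp only [ContinuousLinearMap.zero_apply, sub_zero, zero_mul, norm_le_zero_iff,
        sub_eq_zero] at hmvt
      exact hmvt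
    filter_upwards [Metric.ball_mem_nhds y hs] with y' hy'
    have hEq : (fun q₁ => u (q₁, y')) =ᶠ[𝓝 x₁] (fun q₁ => u (q₁, y)) := by
      filter_upwards [Metric.ball_mem_nhds x₁ hs] with q₁ hq₁
      exact hconst2 q₁ hq₁ y' hy'
    have hp' : ((x₁, y') : Euc n₁ × Euc n₂) ∈ Ω₁ ×ˢ Ω₂ := by
      refine (hballO ?_).1
      rw [Metric.mem_ball, Prod.dist_eq]
      exact max_lt (by simpa using hs) (Metric.mem_ball.mp hy')
    have hp : ((x₁, y) : Euc n₁ × Euc n₂) ∈ Ω₁ ×ˢ Ω₂ := ⟨hx₁, hy⟩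
    have hd1 : HasFDerivAt (fun q₁ => u (q₁, y')) ((g (x₁, y')).comp J₁) x₁ :=
      (hderiv _ hp').comp x₁ (hasFDerivAt_prodMk_left x₁ y')
    have hd0 : HasFDerivAt (fun q₁ => u (q₁, y)) ((g (x₁, y)).comp J₁) x₁ :=
      (hderiv _ hp).comp x₁ (hasFDerivAt_prodMk_left x₁ y)
    have hd0' : HasFDerivAt (fun q₁ => u (q₁, y')) ((g (x₁, y)).comp J₁) x₁ :=
      hd0.congr_of_eventuallyEq hEq
    exact hd1.unique hd0'
  have hfy₀ : f y₀ ≠ 0 := by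
    intro h0
    apply hv
    have h1 := ContinuousLinearMap.ext_iff.1 h0 v
    simpa [hf, hJ₁] using h1
  intro y hy
  have hfeq := eq_of_locallyConst hΩ₂o hΩ₂c hfc hloc hy₀ hfy₀ y hy
  by_contra hcon
  push_neg at hcon
  apply hfy₀
  rw [← hfeq]
  ext v''
  simpa [hf, hJ₁] using hcon v''

lemma slice2 {Ω₁ : Set (Euc n₁)} {Ω₂ : Set (Euc n₂)}
    (hΩ₁o : IsOpen Ω₁) (hΩ₂o : IsOpen Ω₂) (hΩ₁c : IsPreconnected Ω₁)
    {u : Euc n₁ × Euc n₂ → ℝ} {g : Euc n₁ × Euc n₂ → (Euc n₁ × Euc n₂ →L[ℝ] ℝ)}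
    (hg_cont : ContinuousOn g (closure (Ω₁ ×ˢ Ω₂)))
    (hderiv : ∀ x ∈ Ω₁ ×ˢ Ω₂, HasFDerivAt u (g x) x)
    (hkey : ∀ p ∈ Ω₁ ×ˢ Ω₂, (∀ v : Euc n₁, g p (v, 0) = 0) ∨ (∀ w : Euc n₂, g p (0, w) = 0))
    {x₂ : Euc n₂} (hx₂ : x₂ ∈ Ω₂) {y₀ : Euc n₁} (hy₀ : y₀ ∈ Ω₁)
    {w : Euc n₂} (hw : g (y₀, x₂) (0, w) ≠ 0) :
    ∀ y ∈ Ω₁, ∃ w' : Euc n₂, g (y, x₂) (0, w') ≠ 0 := by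
  set J₁ := ContinuousLinearMap.inl ℝ (Euc n₁) (Euc n₂) with hJ₁
  set J₂ := ContinuousLinearMap.inr ℝ (Euc n₁) (Euc n₂) with hJ₂
  set f : Euc n₁ → (Euc n₂ →L[ℝ] ℝ) := fun y => (g (y, x₂)).comp J₂ with hf
  have hιcont : Continuous (fun y : Euc n₁ => ((y, x₂) : Euc n₁ × Euc n₂)) :=
    continuous_id.prodMk continuous_const
  have hmaps : ∀ y ∈ Ω₁, ((y, x₂) : Euc n₁ × Euc n₂) ∈ closure (Ω₁ ×ˢ Ω₂) := fun y hy =>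
    subset_closure (Set.mk_mem_prod hy hx₂)
  have hgy : ContinuousOn (fun y => g (y, x₂)) Ω₁ :=
    hg_cont.comp hιcont.continuousOn hmaps
  have hcomp_lin : IsLinearMap ℝ (fun T : (Euc n₁ × Euc n₂) →L[ℝ] ℝ => T.comp J₂) :=
    ⟨fun a b => by ext x; simp, fun cc a => by ext x; simp⟩
  have hcomp_cont : Continuous (fun T : (Euc n₁ × Euc n₂) →L[ℝ] ℝ => T.comp J₂) :=
    LinearMap.continuous_of_finiteDimensional hcomp_lin.mk'
  have hfc : ContinuousOn f Ω₁ := hcomp_cont.comp_continuousOn hgy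
  have hloc : ∀ y ∈ Ω₁, f y ≠ 0 → ∀ᶠ y' in 𝓝 y, f y' = f y := by
    intro y hy hfy
    have hGcont : ContinuousOn (fun p => (g p).comp J₂) (Ω₁ ×ˢ Ω₂) :=
      hcomp_cont.comp_continuousOn (hg_cont.mono subset_closure)
    have hOopen : IsOpen ((Ω₁ ×ˢ Ω₂) ∩ (fun p => (g p).comp J₂) ⁻¹' ({0}ᶜ)) :=
      hGcont.isOpen_inter_preimage (hΩ₁o.prod hΩ₂o) isOpen_compl_singleton
    have hyO : ((y, x₂) : Euc n₁ × Euc n₂) ∈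
        (Ω₁ ×ˢ Ω₂) ∩ (fun p => (g p).comp J₂) ⁻¹' ({0}ᶜ) := ⟨⟨hy, hx₂⟩, hfy⟩
    obtain ⟨s, hs, hballO⟩ := Metric.isOpen_iff.1 hOopen _ hyO
    have hA1 : ∀ p ∈ Metric.ball ((y, x₂) : Euc n₁ × Euc n₂) s, ∀ v' : Euc n₁,
        g p (v', 0) = 0 := by
      intro p hp v'
      obtain ⟨hpΩ, hpne⟩ := hballO hp
      rcases hkey p hpΩ with h1 | h2
      · exact h1 v'
      · exact absurd (by ext w''; simpa [hJ₂] using h2 w'' : (g p).comp J₂ = 0) hpne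
    have hballsub : ∀ q₂ ∈ Metric.ball x₂ s, ∀ q₁' ∈ Metric.ball y s,
        ((q₁', q₂) : Euc n₁ × Euc n₂) ∈ Metric.ball ((y, x₂) : Euc n₁ × Euc n₂) s := by
      intro q₂ hq₂ q₁' hq₁'
      rw [Metric.mem_ball, Prod.dist_eq]
      exact max_lt (Metric.mem_ball.mp hq₁') (Metric.mem_ball.mp hq₂)
    have hconst1 : ∀ q₂ ∈ Metric.ball x₂ s, ∀ q₁ ∈ Metric.ball y s,
        u (q₁, q₂) = u (y, q₂) := by
      intro q₂ hq₂ q₁ hq₁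
      have hmvt := Convex.norm_image_sub_le_of_norm_hasFDerivWithin_le'
        (f := fun q₁' => u (q₁', q₂)) (f' := fun q₁' => (g (q₁', q₂)).comp J₁)
        (φ := 0) (C := 0)
        (fun ξ hξ => by
          have hp : ((ξ, q₂) : Euc n₁ × Euc n₂) ∈ Ω₁ ×ˢ Ω₂ :=
            (hballO (hballsub q₂ hq₂ ξ hξ)).1
          exact ((hderiv _ hp).comp ξ (hasFDerivAt_prodMk_left ξ q₂)).hasFDerivWithinAt)
        (fun ξ hξ => by
          have h0 : (g (ξ, q₂)).comp J₁ = 0 := by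
            ext v''; simpa [hJ₁] using hA1 _ (hballsub q₂ hq₂ ξ hξ) v''
          show ‖(g (ξ, q₂)).comp J₁ - 0‖ ≤ 0
          rw [h0, sub_zero, norm_zero])
        (convex_ball y s) (Metric.mem_ball_self hs) hq₁
      simp only [ContinuousLinearMap.zero_apply, sub_zero, zero_mul, norm_le_zero_iff,
        sub_eq_zero] at hmvt
      exact hmvt
    filter_upwards [Metric.ball_mem_nhds y hs] with y' hy'
    have hEq : (fun q₂ => u (y', q₂)) =ᶠ[𝓝 x₂] (fun q₂ => u (y, q₂)) := by
      filter_upwards [Metric.ball_mem_nhds x₂ hs] with q₂ hq₂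
      exact hconst1 q₂ hq₂ y' hy'
    have hp' : ((y', x₂) : Euc n₁ × Euc n₂) ∈ Ω₁ ×ˢ Ω₂ := by
      refine (hballO ?_).1
      rw [Metric.mem_ball, Prod.dist_eq]
      exact max_lt (Metric.mem_ball.mp hy') (by simpa using hs)
    have hp : ((y, x₂) : Euc n₁ × Euc n₂) ∈ Ω₁ ×ˢ Ω₂ := ⟨hy, hx₂⟩
    have hd1 : HasFDerivAt (fun q₂ => u (y', q₂)) ((g (y', x₂)).comp J₂) x₂ :=
      (hderiv _ hp').comp x₂ (hasFDerivAt_prodMk_right y' x₂)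
    have hd0 : HasFDerivAt (fun q₂ => u (y, q₂)) ((g (y, x₂)).comp J₂) x₂ :=
      (hderiv _ hp).comp x₂ (hasFDerivAt_prodMk_right y x₂)
    have hd0' : HasFDerivAt (fun q₂ => u (y', q₂)) ((g (y, x₂)).comp J₂) x₂ :=
      hd0.congr_of_eventuallyEq hEq
    exact hd1.unique hd0'
  have hfy₀ : f y₀ ≠ 0 := by
    intro h0
    apply hw
    have h1 := ContinuousLinearMap.ext_iff.1 h0 w
    simpa [hf, hJ₂] using h1
  intro y hy
  have hfeq := eq_of_locallyConst hΩ₁o hΩ₁c hfc hloc hy₀ hfy₀ y hy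
  by_contra hcon
  push_neg at hcon
  apply hfy₀
  rw [← hfeq]
  ext w''
  simpa [hf, hJ₂] using hcon w''


end S2Aux

/-- if `u` is `C¹`, with `u` and `∇u` extending continuously to the
closure of `Ω`, and `E_θ(u) = 0`, then `u ∈ S(Ω)`. -/
theorem statement2 {n₁ n₂ : ℕ} (hn₁ : 1 ≤ n₁) (hn₂ : 1 ≤ n₂)
    (Ω₁ : Set (Euc n₁)) (Ω₂ : Set (Euc n₂)) (hΩ₁ : GoodDomain Ω₁) (hΩ₂ : GoodDomain Ω₂)
    (ρ : Euc n₁ × Euc n₂ → ℝ) (hρ : IsKernel ρ)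
    (θ₁ θ₂ : ℝ) (hθ₁ : 0 < θ₁) (hθ₂ : 0 < θ₂)
    (u : Euc n₁ × Euc n₂ → ℝ)
    (g : Euc n₁ × Euc n₂ → (Euc n₁ × Euc n₂ →L[ℝ] ℝ))
    (hu_cont : ContinuousOn u (closure (Ω₁ ×ˢ Ω₂)))
    (hg_cont : ContinuousOn g (closure (Ω₁ ×ˢ Ω₂)))
    (hderiv : ∀ x ∈ Ω₁ ×ˢ Ω₂, HasFDerivAt u (g x) x)
    (hE : Energy ρ Ω₁ Ω₂ θ₁ θ₂ (θ₁ + θ₂) u = 0) :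
    memS Ω₁ Ω₂ u := by
  
  classical
  have hΩ₁o := hΩ₁.isOpen
  have hΩ₂o := hΩ₂.isOpen
  have hΩo : IsOpen (Ω₁ ×ˢ Ω₂) := hΩ₁o.prod hΩ₂o
  set J₁ := ContinuousLinearMap.inl ℝ (Euc n₁) (Euc n₂) with hJ₁
  set J₂ := ContinuousLinearMap.inr ℝ (Euc n₁) (Euc n₂) with hJ₂
  have hkey : ∀ p ∈ Ω₁ ×ˢ Ω₂,
      (∀ v : Euc n₁, g p (v, 0) = 0) ∨ (∀ w : Euc n₂, g p (0, w) = 0) := by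
    intro p hp
    by_contra hcon
    push_neg at hcon
    obtain ⟨⟨v, hv⟩, ⟨w, hw⟩⟩ := hcon
    exact S2Aux.energy_ne_zero hΩ₁o hΩ₂o hρ hθ₁ hθ₂ hg_cont hderiv hp hv hw hE
  have build1 : (∀ p ∈ Ω₁ ×ˢ Ω₂, ∀ w : Euc n₂, g p (0, w) = 0) → memS Ω₁ Ω₂ u := by
    intro hA2
    obtain ⟨b₂, hb₂⟩ := hΩ₂.nonempty
    have hconst : ∀ x₁ ∈ Ω₁, ∀ x₂ ∈ Ω₂, u (x₁, x₂) = u (x₁, b₂) := by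
      intro x₁ hx₁
      exact S2Aux.const_of_fderiv_zero hΩ₂o hΩ₂.connected.isPreconnected
        (v := fun y => u (x₁, y)) (v' := fun y => (g (x₁, y)).comp J₂)
        (fun y hy => (hderiv _ (Set.mk_mem_prod hx₁ hy)).comp y
          (hasFDerivAt_prodMk_right x₁ y))
        (fun y hy => by ext w''; simpa [hJ₂] using hA2 _ (Set.mk_mem_prod hx₁ hy) w'')
        hb₂
    left
    refine ⟨Ω₁.piecewise (fun x₁ => u (x₁, b₂)) 0, ?_, ?_⟩
    · refine ContinuousOn.measurable_piecewise ?_ continuousOn_const hΩ₁o.measurableSet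
      exact hu_cont.comp (continuous_id.prodMk continuous_const).continuousOn
        (fun x₁ hx₁ => subset_closure (Set.mk_mem_prod hx₁ hb₂))
    · refine ae_restrict_of_forall_mem hΩo.measurableSet (fun x hx => ?_)
      rw [Set.piecewise_eq_of_mem _ _ _ hx.1]
      have hx' : u (x.1, x.2) = u (x.1, b₂) := hconst x.1 hx.1 x.2 hx.2
      rwa [Prod.mk.eta] at hx'
  have build2 : (∀ p ∈ Ω₁ ×ˢ Ω₂, ∀ v : Euc n₁, g p (v, 0) = 0) → memS Ω₁ Ω₂ u := by
    intro hA1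
    obtain ⟨b₁, hb₁⟩ := hΩ₁.nonempty
    have hconst : ∀ x₂ ∈ Ω₂, ∀ x₁ ∈ Ω₁, u (x₁, x₂) = u (b₁, x₂) := by
      intro x₂ hx₂
      exact S2Aux.const_of_fderiv_zero hΩ₁o hΩ₁.connected.isPreconnected
        (v := fun y => u (y, x₂)) (v' := fun y => (g (y, x₂)).comp J₁)
        (fun y hy => (hderiv _ (Set.mk_mem_prod hy hx₂)).comp y
          (hasFDerivAt_prodMk_left y x₂))
        (fun y hy => by ext v''; simpa [hJ₁] using hA1 _ (Set.mk_mem_prod hy hx₂) v'')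
        hb₁
    right
    refine ⟨Ω₂.piecewise (fun x₂ => u (b₁, x₂)) 0, ?_, ?_⟩
    · refine ContinuousOn.measurable_piecewise ?_ continuousOn_const hΩ₂o.measurableSet
      exact hu_cont.comp (continuous_const.prodMk continuous_id).continuousOn
        (fun x₂ hx₂ => subset_closure (Set.mk_mem_prod hb₁ hx₂))
    · refine ae_restrict_of_forall_mem hΩo.measurableSet (fun x hx => ?_)
      rw [Set.piecewise_eq_of_mem _ _ _ hx.2]
      have hx' : u (x.1, x.2) = u (b₁, x.2) := hconst x.2 hx.2 x.1 hx.1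
      rwa [Prod.mk.eta] at hx'
  by_cases hex : ∃ p ∈ Ω₁ ×ˢ Ω₂, ∃ w : Euc n₂, g p (0, w) ≠ 0
  · obtain ⟨a, ha, w, hwa⟩ := hex
    apply build2
    intro p hp v0
    by_contra hv0
    have hwa' : g (a.1, a.2) (0, w) ≠ 0 := by rwa [Prod.mk.eta]
    have hv0' : g (p.1, p.2) (v0, 0) ≠ 0 := by rwa [Prod.mk.eta]
    have hcol := S2Aux.slice1 hΩ₁o hΩ₂o hΩ₂.connected.isPreconnected hg_cont hderiv hkey
      hp.1 hp.2 hv0'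
    have hrow := S2Aux.slice2 hΩ₁o hΩ₂o hΩ₁.connected.isPreconnected hg_cont hderiv hkey
      ha.2 ha.1 hwa'
    obtain ⟨v', hv'⟩ := hcol a.2 ha.2
    have hA2p : ∀ w'' : Euc n₂, g (p.1, a.2) (0, w'') = 0 := by
      rcases hkey (p.1, a.2) (Set.mk_mem_prod hp.1 ha.2) with h1 | h2
      · exact absurd (h1 v') hv'
      · exact h2
    obtain ⟨w', hw'⟩ := hrow p.1 hp.1
    exact hw' (hA2p w')
  · push_neg at hex
    exact build1 hex
end
end
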